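/- arXiv:1909.02947 — 11 statements merged into one kernel-verified Lean document; each statement's English description precedes it below -/
import Mathlib

section
/- Let A be an n×n real matrix with 1's on the diagonal, with the (1,n)-entry equal to b, and all other off-diagonal entries equal to a. Then the vector (c,1,1,...,1)^T, where c = 1 + (1/2)(-n + sqrt(n^2 + 4(b-a)/a)), is an eigenvector of A with eigenvalue λ = 1 - a + (a/2)(n + sqrt(n^2 + 4(b-a)/a)), provided a ≠ 0 and n^2 + 4(b-a)/a ≥ 0. -/
open Matrix

theorem stmt0 (n : ℕ) (hn : 2 ≤ n) (a b : ℝ) (ha : a ≠ 0)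
    (hdisc : 0 ≤ (n : ℝ)^2 + 4 * ((b - a) / a)) :
    let A : Matrix (Fin n) (Fin n) ℝ := Matrix.of fun i j =>
      if i = j then 1 else if i.val = 0 ∧ j.val = n - 1 then b else a
    let c : ℝ := 1 + (1/2) * (-(n:ℝ) + Real.sqrt ((n:ℝ)^2 + 4 * ((b - a) / a)))
    let lam : ℝ := 1 - a + (a/2) * ((n:ℝ) + Real.sqrt ((n:ℝ)^2 + 4 * ((b - a) / a)))
    let v : Fin n → ℝ := fun i => if i.val = 0 then c else 1
    A.mulVec v = lam • v := by
  intro A c lam v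
  haveI : NeZero n := ⟨by omega⟩
  have hs' : a * (Real.sqrt ((n:ℝ)^2 + 4 * ((b - a) / a)))^2
      = a * (n:ℝ)^2 + 4*(b-a) := by
    rw [Real.sq_sqrt hdisc]; field_simp
  set s := Real.sqrt ((n:ℝ)^2 + 4 * ((b - a) / a)) with hsdef
  have hcdef : c = 1 + (1/2) * (-(n:ℝ) + s) := rfl
  have hldef : lam = 1 - a + (a/2) * ((n:ℝ) + s) := rfl
  set jl : Fin n := ⟨n-1, by omega⟩ with hjl
  funext i
  simp only [mulVec, dotProduct, A, v, of_apply, Pi.smul_apply, smul_eq_mul]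
  by_cases hi : i.val = 0
  · have hrw : ∀ j : Fin n, (if i = j then (1:ℝ) else if i.val = 0 ∧ j.val = n - 1 then b else a) * (if j.val = 0 then c else 1)
        = a + (if j = i then c - a else 0) + (if j = jl then b - a else 0) := by
      intro j
      by_cases h1 : j = i
      · subst h1
        have : ¬ (j = jl) := by simp [hjl, Fin.ext_iff, hi]; omega
        simp [hi, this]
      · by_cases h2 : j = jl
        · subst h2
          have hne : ¬ (i = jl) := fun h => h1 h.symm
          have h1' : ¬ ((⟨n-1, by omega⟩ : Fin n) = i) := h1
          have : jl.val ≠ 0 := by simp [hjl]; omega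
          simp [hne, hi, hjl, this, h1', show n - 1 ≠ 0 by omega, Ne.symm h1']
        · have hne : ¬ (i = j) := fun h => h1 h.symm
          have hv : j.val ≠ 0 := by
            intro h; exact h1 (Fin.ext (h.trans hi.symm))
          have hv2 : j.val ≠ n - 1 := by
            intro h; exact h2 (Fin.ext h)
          simp [hne, hv, hv2, h1, h2]
    rw [Finset.sum_congr rfl (fun j _ => hrw j)]
    rw [Finset.sum_add_distrib, Finset.sum_add_distrib, Finset.sum_const,
      Finset.sum_ite_eq' Finset.univ i, Finset.sum_ite_eq' Finset.univ jl]
    simp only [Finset.mem_univ, if_true, Finset.card_univ, Fintype.card_fin,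
      nsmul_eq_mul, hi, if_true]
    rw [hcdef, hldef]
    linear_combination (-1/4) * hs'
  · have hrw : ∀ j : Fin n, (if i = j then (1:ℝ) else if i.val = 0 ∧ j.val = n - 1 then b else a) * (if j.val = 0 then c else 1)
        = a + (if j = (0 : Fin n) then a * c - a else 0) + (if j = i then 1 - a else 0) := by
      intro j
      by_cases h1 : j = i
      · subst h1
        have : ¬ (j = (0 : Fin n)) := fun h => hi (by rw [h]; simp)
        simp [hi, this]
      · by_cases h2 : j = (0 : Fin n)
        · subst h2
          have hne : ¬ (i = (0:Fin n)) := fun h => hi (by rw [h]; simp)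
          have h0i : ¬ ((0:Fin n) = i) := fun h => hne h.symm
          simp [hne, h0i, hi, Fin.val_zero]
        · have hne : ¬ (i = j) := fun h => h1 h.symm
          have hv : j.val ≠ 0 := by
            intro h; exact h2 (Fin.ext h)
          simp [hne, hi, hv, h1, h2]
    rw [Finset.sum_congr rfl (fun j _ => hrw j)]
    rw [Finset.sum_add_distrib, Finset.sum_add_distrib, Finset.sum_const,
      Finset.sum_ite_eq' Finset.univ (0:Fin n), Finset.sum_ite_eq' Finset.univ i]
    simp only [Finset.mem_univ, if_true, Finset.card_univ, Fintype.card_fin,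
      nsmul_eq_mul, hi, if_false]
    rw [hcdef, hldef]
    ring
end

section
/- Let G be a directed clique on a finite vertex set τ, i.e., there is a linear ordering of the vertices such that i → j whenever i < j. Then there exists a unique subset σ ⊆ τ such that σ is a clique (all-to-all bidirectionally connected) and σ has no target in τ (no vertex k ∈ τ \ σ with i → k for all i ∈ σ). -/
private def Pdef {n : ℕ} (E : Fin n → Fin n → Prop) (k : Fin n) : Prop :=
  ∀ j : Fin n, k < j → Pdef E j → E j k
termination_by n - k.val
decreasing_by have h2 := j.isLt; have h3 := Fin.lt_def.mp ‹k < j›; omega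

theorem stmt4 (n : ℕ) (hn : 0 < n) (E : Fin n → Fin n → Prop)
    (hirr : ∀ i, ¬ E i i) (hdc : ∀ i j : Fin n, i < j → E i j) :
    ∃! σ : Finset (Fin n),
      (∀ i ∈ σ, ∀ j ∈ σ, i ≠ j → E i j) ∧
      (∀ k, k ∉ σ → ∃ i ∈ σ, ¬ E i k) := by
  classical
  have Piff : ∀ k : Fin n, Pdef E k ↔ ∀ j : Fin n, k < j → Pdef E j → E j k := by
    intro k; rw [Pdef]
  refine ⟨Finset.univ.filter (fun k => Pdef E k), ⟨?_, ?_⟩, ?_⟩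
  · intro i hi j hj hne
    simp only [Finset.mem_filter] at hi hj
    rcases lt_or_gt_of_ne hne with h | h
    · exact hdc i j h
    · exact (Piff j).mp hj.2 i h hi.2
  · intro k hk
    simp only [Finset.mem_filter, Finset.mem_univ, true_and] at hk
    rw [Piff] at hk
    push_neg at hk
    obtain ⟨j, hkj, hPj, hne⟩ := hk
    exact ⟨j, by simp [hPj], hne⟩
  · intro σ' ⟨hcl, htf⟩
    have key : ∀ m, ∀ k : Fin n, n - k.val ≤ m → (k ∈ σ' ↔ Pdef E k) := by
      intro m
      induction m with
      | zero => intro k hk; have := k.isLt; omega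
      | succ m ih =>
        intro k hk
        constructor
        · intro hmem
          rw [Piff]
          intro j hkj hPj
          have hj : j ∈ σ' := by
            rw [ih j (by have := Fin.lt_def.mp hkj; omega)]; exact hPj
          exact hcl j hj k hmem (ne_of_gt hkj)
        · intro hPk
          by_contra hmem
          obtain ⟨i, hi, hEik⟩ := htf k hmem
          rcases lt_trichotomy i k with h | h | h
          · exact hEik (hdc i k h)
          · exact hmem (h ▸ hi)
          · have hPi : Pdef E i := (ih i (by have := Fin.lt_def.mp h; omega)).mp hi
            exact hEik ((Piff k).mp hPk i h hPi)
    ext k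
    simp only [Finset.mem_filter, Finset.mem_univ, true_and]
    exact key n k (by have := k.isLt; omega)
end

section
/- Let G be a simple directed graph on n vertices with maximum in-degree d < n - 1, and let W be a CTLN matrix for G with parameters ε, δ satisfying 0 < ε < 1 and δ > εd/(n-1-d). Then I - W has an eigenvalue with negative real part (so -I + W is unstable). -/
open Matrix

open Polynomial Finset in
lemma perron_aux {n : ℕ} (hn : 0 < n) (A : Matrix (Fin n) (Fin n) ℝ)
    (hA : ∀ i j, 0 < A i j) :
    ∃ (r : ℝ) (x : Fin n → ℝ), (∀ i, 0 < x i) ∧ A.mulVec x = r • x := by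
  have hne : (Finset.univ : Finset (Fin n)).Nonempty := ⟨⟨0, hn⟩, Finset.mem_univ _⟩
  have hne2 : (Finset.univ : Finset (Fin n × Fin n)).Nonempty :=
    ⟨(⟨0, hn⟩, ⟨0, hn⟩), Finset.mem_univ _⟩
  obtain ⟨p, -, hp⟩ := Finset.exists_min_image Finset.univ (fun p : Fin n × Fin n => A p.1 p.2) hne2
  set a : ℝ := A p.1 p.2 with ha
  have ha0 : 0 < a := hA _ _
  have haA : ∀ i j, a ≤ A i j := fun i j => hp (i, j) (Finset.mem_univ _)
  obtain ⟨j0, -, hj0⟩ := Finset.exists_max_image Finset.univ (fun j => ∑ i, A i j) hne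
  set Cm : ℝ := ∑ i, A i j0 with hCm
  have hCm0 : 0 < Cm := Finset.sum_pos (fun i _ => hA i j0) hne
  set m : ℝ := a / Cm with hm
  have hm0 : 0 < m := div_pos ha0 hCm0
  set K : Set (Fin n → ℝ) := {x | (∀ i, m ≤ x i) ∧ ∑ i, x i = 1} with hK
  -- basic positivity facts for elements of the simplex
  have hz : ∀ x : Fin n → ℝ, (∀ i, 0 ≤ x i) → (∑ i, x i) = 1 →
      (∀ i, a ≤ A.mulVec x i) ∧ (∑ i, A.mulVec x i) ≤ Cm := by
    intro x hx hx1
    constructor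
    · intro i
      have : ∑ j, a * x j ≤ ∑ j, A i j * x j :=
        Finset.sum_le_sum (fun j _ => mul_le_mul_of_nonneg_right (haA i j) (hx j))
      calc a = ∑ j, a * x j := by rw [← Finset.mul_sum, hx1, mul_one]
        _ ≤ ∑ j, A i j * x j := this
        _ = A.mulVec x i := rfl
    · have : ∑ i, A.mulVec x i = ∑ j, (∑ i, A i j) * x j := by
        simp only [Matrix.mulVec, dotProduct]
        rw [Finset.sum_comm]
        simp [Finset.sum_mul]
      rw [this]
      calc ∑ j, (∑ i, A i j) * x j ≤ ∑ j, Cm * x j :=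
            Finset.sum_le_sum (fun j _ => mul_le_mul_of_nonneg_right (hj0 j (Finset.mem_univ _)) (hx j))
        _ = Cm := by rw [← Finset.mul_sum, hx1, mul_one]
  -- normalization step
  have hstep : ∀ x : Fin n → ℝ, (∀ i, 0 ≤ x i) → (∑ i, x i) = 1 →
      (∑ i, A.mulVec x i)⁻¹ • A.mulVec x ∈ K := by
    intro x hx hx1
    obtain ⟨h1, h2⟩ := hz x hx hx1
    have hσ0 : 0 < ∑ i, A.mulVec x i :=
      Finset.sum_pos (fun i _ => lt_of_lt_of_le ha0 (h1 i)) hne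
    constructor
    · intro i
      show m ≤ (∑ i, A.mulVec x i)⁻¹ * A.mulVec x i
      rw [hm, div_eq_mul_inv, mul_comm ((∑ i, A.mulVec x i)⁻¹)]
      apply div_le_div₀ (le_trans ha0.le (h1 i)) (h1 i) hσ0 h2 |>.trans_eq
      · rw [div_eq_mul_inv]
    · show ∑ i, (∑ i, A.mulVec x i)⁻¹ * A.mulVec x i = 1
      rw [← Finset.mul_sum, inv_mul_cancel₀ hσ0.ne']
  have hKsimplex : ∀ x ∈ K, (∀ i, 0 ≤ x i) ∧ (∑ i, x i) = 1 :=
    fun x hx => ⟨fun i => le_trans hm0.le (hx.1 i), hx.2⟩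
  -- K is compact and nonempty
  have hKc : IsCompact K := by
    apply IsCompact.of_isClosed_subset (isCompact_univ_pi (fun _ : Fin n => isCompact_Icc (a := m) (b := 1)))
    · have h1 : IsClosed {x : Fin n → ℝ | ∀ i, m ≤ x i} := by
        have : {x : Fin n → ℝ | ∀ i, m ≤ x i} = ⋂ i, {x | m ≤ x i} := by ext; simp
        rw [this]
        exact isClosed_iInter fun i => isClosed_le continuous_const (continuous_apply i)
      have h2 : IsClosed {x : Fin n → ℝ | ∑ i, x i = 1} :=
        isClosed_eq (continuous_finset_sum _ fun i _ => continuous_apply i) continuous_const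
      exact h1.inter h2
    · intro x hx
      refine Set.mem_univ_pi.2 fun i => ⟨hx.1 i, ?_⟩
      have := (hKsimplex x hx).1
      calc x i ≤ ∑ j, x j := Finset.single_le_sum (fun j _ => this j) (Finset.mem_univ i)
        _ = 1 := hx.2
  have hKne : K.Nonempty := by
    refine ⟨_, hstep (fun _ => (n : ℝ)⁻¹) (fun i => by positivity) ?_⟩
    rw [Finset.sum_const, Finset.card_univ, Fintype.card_fin, nsmul_eq_mul,
      mul_inv_cancel₀ (by exact_mod_cast hn.ne')]
  -- the Collatz-Wielandt function
  set Φ : (Fin n → ℝ) → ℝ := fun x => Finset.univ.inf' hne (fun i => A.mulVec x i / x i) with hΦ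
  have hΦcont : ContinuousOn Φ K := by
    apply ContinuousOn.finset_inf'_apply hne
    intro i _
    apply ContinuousOn.div
    · exact Continuous.continuousOn (by
        simp only [Matrix.mulVec, dotProduct]
        exact continuous_finset_sum _ fun j _ => (continuous_const.mul (continuous_apply j)))
    · exact (continuous_apply i).continuousOn
    · exact fun x hx => (lt_of_lt_of_le hm0 (hx.1 i)).ne'
  obtain ⟨x, hxK, hxmax⟩ := hKc.exists_isMaxOn hKne hΦcont
  set r : ℝ := Φ x with hr
  have hxpos : ∀ i, 0 < x i := fun i => lt_of_lt_of_le hm0 (hxK.1 i)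
  have hrle : ∀ i, r * x i ≤ A.mulVec x i := by
    intro i
    have h := Finset.inf'_le (fun i => A.mulVec x i / x i) (Finset.mem_univ i)
    exact (le_div_iff₀ (hxpos i)).mp h
  refine ⟨r, x, hxpos, ?_⟩
  by_contra hne'
  -- some coordinate is strict
  have hstrict : ∃ i, r * x i < A.mulVec x i := by
    by_contra h
    push_neg at h
    apply hne'
    funext i
    have := le_antisymm (h i) (hrle i)
    simpa [Pi.smul_apply, smul_eq_mul] using this
  obtain ⟨i0, hi0⟩ := hstrict
  set z : Fin n → ℝ := A.mulVec x with hzdef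
  have hzpos : ∀ i, 0 < z i := fun i => lt_of_lt_of_le ha0 ((hz x (hKsimplex x hxK).1 hxK.2).1 i)
  have hAz : ∀ i, r * z i < A.mulVec z i := by
    intro i
    have hlt : ∑ j, A i j * (r * x j) < ∑ j, A i j * z j := by
      apply Finset.sum_lt_sum
      · exact fun j _ => mul_le_mul_of_nonneg_left (hrle j) (hA i j).le
      · exact ⟨i0, Finset.mem_univ _, mul_lt_mul_of_pos_left hi0 (hA i i0)⟩
    calc r * z i = ∑ j, A i j * (r * x j) := by
          show r * A.mulVec x i = _
          simp only [Matrix.mulVec, dotProduct, Finset.mul_sum]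
          exact Finset.sum_congr rfl fun j _ => by ring
      _ < ∑ j, A i j * z j := hlt
      _ = A.mulVec z i := rfl
  have hσ : 0 < ∑ i, z i := Finset.sum_pos (fun i _ => hzpos i) hne
  have hwK : (∑ i, z i)⁻¹ • z ∈ K := hstep x (hKsimplex x hxK).1 hxK.2
  have hΦw : r < Φ ((∑ i, z i)⁻¹ • z) := by
    rw [hΦ]
    refine (Finset.lt_inf'_iff hne).mpr fun i _ => ?_
    have hmv : A.mulVec ((∑ i, z i)⁻¹ • z) = (∑ i, z i)⁻¹ • A.mulVec z :=
      Matrix.mulVec_smul A _ z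
    rw [hmv, Pi.smul_apply, Pi.smul_apply, smul_eq_mul, smul_eq_mul,
      mul_div_mul_left _ _ (inv_ne_zero hσ.ne')]
    exact (lt_div_iff₀ (hzpos i)).mpr (hAz i)
  exact absurd (hxmax hwK) (not_le.mpr hΦw)

lemma charpoly_eval' {n : ℕ} {K : Type*} [Field K] (M : Matrix (Fin n) (Fin n) K) (t : K) :
    M.charpoly.eval t = (t • (1 : Matrix (Fin n) (Fin n) K) - M).det := by
  rw [Matrix.charpoly, _root_.eval_det, matPolyEquiv_charmatrix]
  congr 1
  rw [Polynomial.eval_sub, Polynomial.eval_X, Polynomial.eval_C, Matrix.scalar_apply]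
  congr 1
  rw [Matrix.smul_one_eq_diagonal]

lemma root_mem_spectrum {n : ℕ} (B : Matrix (Fin n) (Fin n) ℂ) (μ : ℂ)
    (h : B.charpoly.IsRoot μ) : μ ∈ spectrum ℂ B := by
  rw [spectrum.mem_iff]
  intro hU
  rw [Matrix.isUnit_iff_isUnit_det, Algebra.algebraMap_eq_smul_one, ← charpoly_eval', h] at hU
  simpa using hU

set_option maxHeartbeats 1000000 in
theorem stmt6 (n d : ℕ) (E : Fin n → Fin n → Prop) [DecidableRel E] (hirr : ∀ i, ¬ E i i)
    (hd : ∀ i : Fin n, Nat.card {j : Fin n // E j i} ≤ d) (hdn : d + 1 < n)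
    (ε δ : ℝ) (hε : 0 < ε) (hε1 : ε < 1)
    (hδ : ε * d / ((n : ℝ) - 1 - d) < δ) (hδ0 : 0 < δ) :
    let W : Matrix (Fin n) (Fin n) ℝ := Matrix.of fun i j =>
      if i = j then 0 else if E j i then -1 + ε else -1 - δ
    ∃ μ ∈ spectrum ℂ ((1 - W).map Complex.ofReal), μ.re < 0 := by
  intro W
  have hW : ∀ i j, W i j = if i = j then 0 else if E j i then -1 + ε else -1 - δ :=
    fun i j => rfl
  set A : Matrix (Fin n) (Fin n) ℝ := 1 - W with hA
  have hn0 : 0 < n := by omega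
  have hne : (Finset.univ : Finset (Fin n)).Nonempty := ⟨⟨0, hn0⟩, Finset.mem_univ _⟩
  have hnd : (0:ℝ) < (n:ℝ) - 1 - d := by
    have : (d:ℝ) + 1 < (n:ℝ) := by exact_mod_cast hdn
    linarith
  have hApos : ∀ i j, 0 < A i j := by
    intro i j
    simp only [hA, Matrix.sub_apply, Matrix.one_apply, hW i j]
    by_cases h : i = j
    · simp [h]
    · by_cases h2 : E j i <;> simp [h, h2] <;> linarith
  have hAdiag : ∀ i, A i i = 1 := by
    intro i
    simp [hA, Matrix.sub_apply, Matrix.one_apply, hW i i]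
  set c : ℝ := n + (((n:ℝ) - 1 - d) * δ - d * ε) with hc
  have hcn : (n:ℝ) < c := by
    have := (div_lt_iff₀ hnd).mp hδ
    rw [hc]; nlinarith
  have hrow : ∀ i, c ≤ ∑ j, A i j := by
    intro i
    classical
    set F := Finset.univ.filter (fun j => E j i) with hF
    have hFd : (F.card : ℝ) ≤ d := by
      have h1 : F.card = Nat.card {j // E j i} := by
        rw [Nat.card_eq_fintype_card, Fintype.card_subtype]
      have := hd i
      exact_mod_cast h1 ▸ this
    have hiF : i ∉ F := by simp [hF, hirr i]
    have hsub : F ⊆ Finset.univ.erase i :=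
      fun j hj => Finset.mem_erase.mpr ⟨fun h => hiF (h ▸ hj), Finset.mem_univ _⟩
    have hcardE : (Finset.univ.erase i).card = n - 1 := by
      rw [Finset.card_erase_of_mem (Finset.mem_univ i), Finset.card_univ, Fintype.card_fin]
    have hFn : F.card ≤ n - 1 := hcardE ▸ Finset.card_le_card hsub
    have hfilt : (Finset.univ.erase i).filter (fun j => E j i) = F := by
      ext j
      simp only [Finset.mem_filter, Finset.mem_erase, Finset.mem_univ, hF, true_and, and_true]
      constructor
      · rintro ⟨-, h⟩; exact h
      · intro h; exact ⟨fun hji => hirr i (by rwa [hji] at h), h⟩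
    have hsplit : ∑ j ∈ Finset.univ.erase i, A i j
        = F.card * (1 - ε) + ((n - 1) - F.card : ℕ) * (1 + δ) := by
      have he : ∀ j ∈ Finset.univ.erase i, A i j = if E j i then 1 - ε else 1 + δ := by
        intro j hj
        have hij : i ≠ j := fun h => (Finset.mem_erase.mp hj).1 h.symm
        simp only [hA, Matrix.sub_apply, Matrix.one_apply, hW i j, if_neg hij]
        by_cases h2 : E j i <;> simp [h2] <;> ring
      rw [Finset.sum_congr rfl he,
        ← Finset.sum_filter_add_sum_filter_not (Finset.univ.erase i) (fun j => E j i)]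
      have h3 : ((Finset.univ.erase i).filter (fun j => ¬ E j i)).card = (n - 1) - F.card := by
        have := Finset.card_filter_add_card_filter_not
          (s := Finset.univ.erase i) (p := fun j => E j i)
        rw [hfilt, hcardE] at this
        omega
      rw [Finset.sum_ite_of_true, Finset.sum_ite_of_false, Finset.sum_const, Finset.sum_const,
        hfilt, h3, nsmul_eq_mul, nsmul_eq_mul]
      · intro j hj; exact (Finset.mem_filter.mp hj).2
      · intro j hj; exact (Finset.mem_filter.mp hj).2
    have hsum : ∑ j, A i j = 1 + ∑ j ∈ Finset.univ.erase i, A i j := by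
      rw [← Finset.add_sum_erase Finset.univ _ (Finset.mem_univ i), hAdiag i]
    rw [hsum, hsplit]
    have hcast : (((n - 1) - F.card : ℕ) : ℝ) = (n:ℝ) - 1 - F.card := by
      have h1 : 1 ≤ n := hn0
      push_cast [Nat.cast_sub hFn, Nat.cast_sub h1]
      ring
    rw [hcast, hc]
    have hk0 : (0:ℝ) ≤ (F.card : ℝ) := Nat.cast_nonneg _
    nlinarith [mul_nonneg (sub_nonneg.mpr hFd) hε.le, mul_nonneg (sub_nonneg.mpr hFd) hδ0.le]
  obtain ⟨r, x, hxpos, heig⟩ := perron_aux hn0 A hApos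
  obtain ⟨i0, -, hmin⟩ := Finset.exists_min_image Finset.univ x hne
  have hrx : A.mulVec x i0 = r * x i0 := by rw [heig]; rfl
  have hcr : c * x i0 ≤ r * x i0 := by
    rw [← hrx]
    calc c * x i0 ≤ (∑ j, A i0 j) * x i0 :=
          mul_le_mul_of_nonneg_right (hrow i0) (hxpos i0).le
      _ = ∑ j, A i0 j * x i0 := Finset.sum_mul _ _ _
      _ ≤ ∑ j, A i0 j * x j :=
          Finset.sum_le_sum fun j _ =>
            mul_le_mul_of_nonneg_left (hmin j (Finset.mem_univ _)) (hApos i0 j).le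
      _ = A.mulVec x i0 := rfl
  have hrc : c ≤ r := le_of_mul_le_mul_right hcr (hxpos i0)
  have hrn : (n:ℝ) < r := lt_of_lt_of_le hcn hrc
  have hdet : (r • (1:Matrix (Fin n) (Fin n) ℝ) - A).det = 0 := by
    rw [← Matrix.exists_mulVec_eq_zero_iff]
    refine ⟨x, fun h0 => (hxpos i0).ne' (congrFun h0 i0), ?_⟩
    rw [Matrix.sub_mulVec, Matrix.smul_mulVec, Matrix.one_mulVec, heig, sub_self]
  set B : Matrix (Fin n) (Fin n) ℂ := A.map Complex.ofReal with hB
  have hBeq : B = A.map ⇑Complex.ofRealHom := by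
    rw [hB]; rfl
  have hchB : B.charpoly = A.charpoly.map Complex.ofRealHom := by
    rw [hBeq]; exact Matrix.charpoly_map A _
  have hroot : (r:ℂ) ∈ B.charpoly.roots := by
    rw [Polynomial.mem_roots']
    refine ⟨B.charpoly_monic.ne_zero, ?_⟩
    rw [hchB]
    show Polynomial.eval (Complex.ofRealHom r) _ = 0
    rw [Polynomial.eval_map, Polynomial.eval₂_at_apply, charpoly_eval', hdet, map_zero]
  have htr : B.trace = (n:ℂ) := by
    have : ∀ i, B i i = 1 := fun i => by
      simp [hB, Matrix.map_apply, hAdiag i]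
    simp [Matrix.trace, Matrix.diag, this, Finset.sum_const, Finset.card_univ]
  obtain ⟨t, ht⟩ := Multiset.exists_cons_of_mem hroot
  have hts : ((r:ℂ) + t.sum) = (n:ℂ) := by
    rw [← Multiset.sum_cons, ← ht, ← Matrix.trace_eq_sum_roots_charpoly, htr]
  have htre : t.sum.re = (n:ℝ) - r := by
    have := congrArg Complex.re hts
    simp only [Complex.add_re, Complex.ofReal_re, Complex.natCast_re] at this
    linarith
  have hμex : ∃ μ ∈ t, μ.re < 0 := by
    by_contra h
    push_neg at h
    have h1 : t.sum.re = (t.map Complex.re).sum := by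
      rw [← Complex.coe_reAddGroupHom, AddMonoidHom.map_multiset_sum]
    have h2 : (0:ℝ) ≤ (t.map Complex.re).sum := by
      apply Multiset.sum_nonneg
      intro y hy
      obtain ⟨μ, hμ, rfl⟩ := Multiset.mem_map.mp hy
      exact h μ hμ
    rw [h1] at htre
    linarith
  obtain ⟨μ, hμt, hμre⟩ := hμex
  refine ⟨μ, ?_, hμre⟩
  exact root_mem_spectrum B μ
    (Polynomial.isRoot_of_mem_roots (ht ▸ Multiset.mem_cons_of_mem hμt))
end

section
/- Let G be a simple directed graph on n vertices that is not a clique (some ordered pair (i,j), i≠j, with j ̸→ i), and let W = W(G,ε,δ) with 0 < ε < 1 and δ > (ε/(1-ε))·(n² - n - 1). Then I - W has an eigenvalue with negative real part, so -I + W is not a stable matrix. -/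
open Matrix Polynomial

private lemma smul_one_eq_diag {n : ℕ} (z : ℂ) :
    z • (1 : Matrix (Fin n) (Fin n) ℂ) = Matrix.diagonal (fun _ => z) := by
  ext i j
  by_cases h : i = j <;> simp [Matrix.one_apply, Matrix.diagonal, h]

private lemma eval_charpoly' {n : ℕ} (M : Matrix (Fin n) (Fin n) ℂ) (z : ℂ) :
    M.charpoly.eval z = (z • (1 : Matrix (Fin n) (Fin n) ℂ) - M).det := by
  rw [Matrix.charpoly, Polynomial.eval, ← Polynomial.coe_eval₂RingHom, RingHom.map_det]
  congr 1
  ext i j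
  by_cases h : i = j
  · subst h
    simp [Matrix.charmatrix_apply_eq, Matrix.one_apply, Matrix.sub_apply, Matrix.smul_apply]
  · simp [Matrix.charmatrix_apply_ne _ _ _ h, Matrix.one_apply_ne h, Matrix.sub_apply,
      Matrix.smul_apply]

private lemma card_roots_charpoly {n : ℕ} (M : Matrix (Fin n) (Fin n) ℂ) :
    Multiset.card M.charpoly.roots = n := by
  have h := (IsAlgClosed.splits M.charpoly).natDegree_eq_card_roots
  rw [← h, Matrix.charpoly_natDegree_eq_dim, Fintype.card_fin]

private lemma charpoly_sq {n : ℕ} (M : Matrix (Fin n) (Fin n) ℂ) :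
    (M * M).charpoly = ((M.charpoly.roots.map (fun r => r ^ 2)).map (fun a => X - C a)).prod := by
  have hM : M.charpoly = (M.charpoly.roots.map fun a => X - C a).prod :=
    (IsAlgClosed.splits M.charpoly).eq_prod_roots_of_monic M.charpoly_monic
  apply Polynomial.funext
  intro z
  obtain ⟨w, hw⟩ := IsAlgClosed.exists_pow_nat_eq z zero_lt_two
  have key : z • (1 : Matrix (Fin n) (Fin n) ℂ) - M * M = (w • 1 - M) * (w • 1 + M) := by
    simp only [sub_mul, mul_add, smul_mul_assoc, mul_smul_comm, one_mul, mul_one,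
      smul_add, smul_sub, smul_smul, smul_neg, neg_smul, ← hw, pow_two]
    abel
  have hdetsub : (w • (1 : Matrix (Fin n) (Fin n) ℂ) - M).det
      = (M.charpoly.roots.map (fun a => w - a)).prod := by
    rw [← eval_charpoly']
    conv_lhs => rw [hM]
    rw [Polynomial.eval_multiset_prod, Multiset.map_map]
    congr 1
    apply Multiset.map_congr rfl
    intro a _
    simp
  have hdetadd : (w • (1 : Matrix (Fin n) (Fin n) ℂ) + M).det
      = (M.charpoly.roots.map (fun a => w + a)).prod := by
    have h1 : w • (1 : Matrix (Fin n) (Fin n) ℂ) + M = -((-w) • 1 - M) := by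
      rw [neg_sub, neg_smul, sub_neg_eq_add, add_comm]
    rw [h1, Matrix.det_neg, ← eval_charpoly', Fintype.card_fin]
    conv_lhs => rw [hM]
    rw [Polynomial.eval_multiset_prod, Multiset.map_map]
    have h2 : (M.charpoly.roots.map (Polynomial.eval (-w) ∘ fun a => X - C a)).prod
        = (M.charpoly.roots.map (fun a => (-1) * (w + a))).prod := by
      congr 1
      apply Multiset.map_congr rfl
      intro a _
      simp
      ring
    rw [h2, Multiset.prod_map_mul, Multiset.map_const', Multiset.prod_replicate,
      card_roots_charpoly]
    rw [← mul_assoc, ← pow_add, ← two_mul, pow_mul]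
    simp
  calc Polynomial.eval z (M * M).charpoly
      = ((w • (1 : Matrix (Fin n) (Fin n) ℂ) - M) * (w • 1 + M)).det := by
        rw [eval_charpoly', key]
    _ = (M.charpoly.roots.map (fun a => w - a)).prod
        * (M.charpoly.roots.map (fun a => w + a)).prod := by
        rw [Matrix.det_mul, hdetsub, hdetadd]
    _ = Polynomial.eval z
        (((M.charpoly.roots.map (fun r => r ^ 2)).map (fun a => X - C a)).prod) := by
        rw [Polynomial.eval_multiset_prod, Multiset.map_map, Multiset.map_map,
          ← Multiset.prod_map_mul]
        congr 1
        apply Multiset.map_congr rfl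
        intro a _
        simp [← hw]
        ring

private lemma trace_sq {n : ℕ} (M : Matrix (Fin n) (Fin n) ℂ) :
    (M * M).trace = (M.charpoly.roots.map (fun r => r ^ 2)).sum := by
  rw [Matrix.trace_eq_sum_roots_charpoly, charpoly_sq, Polynomial.roots_multiset_prod_X_sub_C]

theorem stmt7 (n : ℕ) (E : Fin n → Fin n → Prop) [DecidableRel E] (hirr : ∀ i, ¬ E i i)
    (hnc : ∃ i j : Fin n, i ≠ j ∧ ¬ E i j)
    (ε δ : ℝ) (hε : 0 < ε) (hε1 : ε < 1)
    (hδ : ε / (1 - ε) * ((n : ℝ)^2 - n - 1) < δ) :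
    let W : Matrix (Fin n) (Fin n) ℝ := Matrix.of fun i j =>
      if i = j then 0 else if E j i then -1 + ε else -1 - δ
    ∃ μ ∈ spectrum ℂ ((1 - W).map Complex.ofReal), μ.re < 0 := by
  intro W
  obtain ⟨i₀, j₀, hij, hEn⟩ := hnc
  set A : Matrix (Fin n) (Fin n) ℝ := 1 - W with hA
  -- basic numeric facts
  have hn2 : (2 : ℝ) ≤ (n : ℝ) := by
    have h1n : 1 < n := by
      have : Nontrivial (Fin n) := ⟨⟨i₀, j₀, hij⟩⟩
      have := Fintype.one_lt_card_iff_nontrivial.mpr this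
      simpa using this
    exact_mod_cast h1n
  have h1ε : (0 : ℝ) < 1 - ε := by linarith
  have hδ' : ε * ((n : ℝ)^2 - n - 1) < δ * (1 - ε) := by
    rw [div_mul_eq_mul_div, div_lt_iff₀ h1ε] at hδ
    linarith
  have hδ0 : 0 < δ := by
    have hpos : (0:ℝ) < (n : ℝ)^2 - n - 1 := by nlinarith
    nlinarith [mul_pos hε hpos]
  -- entries of A
  have hAdiag : ∀ i, A i i = 1 := by
    intro i
    simp [hA, W, Matrix.sub_apply, Matrix.one_apply]
  have hAoff : ∀ i k, i ≠ k → A i k = if E k i then 1 - ε else 1 + δ := by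
    intro i k h
    simp only [hA, Matrix.sub_apply, Matrix.one_apply_ne h, W, Matrix.of_apply, if_neg h]
    split_ifs <;> ring
  have hAlow : ∀ i k, i ≠ k → 1 - ε ≤ A i k := by
    intro i k h
    rw [hAoff i k h]
    split_ifs <;> linarith
  have hAspec : A j₀ i₀ = 1 + δ := by
    rw [hAoff j₀ i₀ hij.symm, if_neg hEn]
  -- the trace of A * A
  set T : ℝ := (A * A).trace with hTdef
  set f : Fin n × Fin n → ℝ := fun p => A p.1 p.2 * A p.2 p.1 with hfdef
  set g : Fin n × Fin n → ℝ := fun p => if p.1 = p.2 then 1 else (1 - ε)^2 with hgdef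
  have hT : T = ∑ p : Fin n × Fin n, f p := by
    rw [hTdef, Matrix.trace, Fintype.sum_prod_type]
    simp [Matrix.diag, Matrix.mul_apply, hfdef]
  have hfg : ∀ p : Fin n × Fin n, g p ≤ f p := by
    intro p
    by_cases h : p.1 = p.2
    · simp [hgdef, hfdef, h, hAdiag]
    · have h1 := hAlow p.1 p.2 h
      have h2 := hAlow p.2 p.1 (Ne.symm h)
      simp only [hgdef, hfdef, if_neg h]
      nlinarith
  have hgsum : ∑ p : Fin n × Fin n, g p = n + ((n : ℝ)^2 - n) * (1 - ε)^2 := by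
    have hg' : ∀ p : Fin n × Fin n, g p
        = (1 - ε)^2 + (if p.1 = p.2 then 1 - (1 - ε)^2 else 0) := by
      intro p
      simp only [hgdef]
      split_ifs <;> ring
    rw [Finset.sum_congr rfl (fun p _ => hg' p), Finset.sum_add_distrib, Finset.sum_const]
    rw [Fintype.sum_prod_type]
    simp only [Finset.sum_ite_eq, Finset.mem_univ, if_pos]
    simp only [Finset.card_univ, Fintype.card_prod, Fintype.card_fin, Finset.sum_const,
      nsmul_eq_mul]
    push_cast
    ring
  have hpairne : ((i₀, j₀) : Fin n × Fin n) ≠ (j₀, i₀) := by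
    simp only [ne_eq, Prod.mk.injEq, not_and]
    intro h
    exact absurd h hij
  have hextra : 2 * ((1 - ε) * (1 + δ) - (1 - ε)^2) ≤ ∑ p : Fin n × Fin n, (f p - g p) := by
    have hsub : ∑ p ∈ ({(i₀, j₀), (j₀, i₀)} : Finset (Fin n × Fin n)), (f p - g p)
        ≤ ∑ p : Fin n × Fin n, (f p - g p) :=
      Finset.sum_le_sum_of_subset_of_nonneg (Finset.subset_univ _)
        (fun p _ _ => sub_nonneg.mpr (hfg p))
    rw [Finset.sum_pair hpairne] at hsub
    have hf1 : (1 - ε) * (1 + δ) ≤ f (i₀, j₀) := by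
      have := mul_le_mul_of_nonneg_right (hAlow i₀ j₀ hij) (by linarith : (0:ℝ) ≤ 1 + δ)
      simpa [hfdef, hAspec] using this
    have hf2 : (1 - ε) * (1 + δ) ≤ f (j₀, i₀) := by
      have := mul_le_mul_of_nonneg_left (hAlow i₀ j₀ hij) (by linarith : (0:ℝ) ≤ 1 + δ)
      simpa [hfdef, hAspec, mul_comm] using this
    have hg1 : g (i₀, j₀) = (1 - ε)^2 := by simp [hgdef, hij]
    have hg2 : g (j₀, i₀) = (1 - ε)^2 := by simp [hgdef, hij.symm]
    rw [hg1, hg2] at hsub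
    linarith
  have hTlb : (n : ℝ) + ((n : ℝ)^2 - n) * (1 - ε)^2
      + 2 * ((1 - ε) * (1 + δ) - (1 - ε)^2) ≤ T := by
    have : ∑ p : Fin n × Fin n, (f p - g p)
        = ∑ p : Fin n × Fin n, f p - ∑ p : Fin n × Fin n, g p := Finset.sum_sub_distrib _ _
    rw [this] at hextra
    rw [hT]
    rw [hgsum] at hextra
    linarith
  -- spectral part
  by_contra hcon
  push_neg at hcon
  set B : Matrix (Fin n) (Fin n) ℂ := A.map Complex.ofReal with hB
  set R : Multiset ℂ := B.charpoly.roots with hR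
  have hBtrace : B.trace = (n : ℂ) := by
    simp [Matrix.trace, Matrix.diag, hB, Matrix.map_apply, hAdiag]
  have hBBtrace : (B * B).trace = (T : ℂ) := by
    rw [hTdef]
    simp only [Matrix.trace, Matrix.diag, Matrix.mul_apply, hB, Matrix.map_apply]
    push_cast
    rfl
  have hRsum : R.sum = (n : ℂ) := by
    rw [hR, ← Matrix.trace_eq_sum_roots_charpoly, hBtrace]
  have hRsq : (R.map (fun r => r^2)).sum = (T : ℂ) := by
    rw [hR, ← trace_sq, hBBtrace]
  have hmem : ∀ r ∈ R, 0 ≤ r.re := by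
    intro r hr
    apply hcon
    rw [spectrum.mem_iff]
    intro hu
    rw [Matrix.isUnit_iff_isUnit_det] at hu
    have halg : algebraMap ℂ (Matrix (Fin n) (Fin n) ℂ) r = r • 1 := by
      rw [Matrix.algebraMap_eq_diagonal, smul_one_eq_diag]
      rfl
    have hroot : B.charpoly.IsRoot r := (Polynomial.mem_roots'.mp hr).2
    rw [halg, ← eval_charpoly', hroot] at hu
    simp at hu
  have hre_sum : (R.map Complex.re).sum = (n : ℝ) := by
    have h1 : (R.map Complex.re).sum = (R.sum).re :=
      (map_multiset_sum Complex.reAddGroupHom R).symm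
    rw [h1, hRsum]
    simp
  have hub : ∀ r ∈ R, r.re ≤ (n : ℝ) := by
    intro r hr
    have hmm : r.re ∈ R.map Complex.re := Multiset.mem_map_of_mem _ hr
    have := Multiset.single_le_sum (fun x hx => by
      obtain ⟨r', hr', rfl⟩ := Multiset.mem_map.mp hx
      exact hmem r' hr') _ hmm
    rwa [hre_sum] at this
  have hTub : T ≤ (n : ℝ) * n := by
    have h1 : (T : ℂ).re = ((R.map (fun r => r^2)).sum).re := by rw [hRsq]
    have h2 : ((R.map (fun r => r^2)).sum).re = (R.map (fun r => (r^2).re)).sum := by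
      have h2' := map_multiset_sum Complex.reAddGroupHom (R.map (fun r => r^2))
      rw [Multiset.map_map] at h2'
      simpa [Function.comp] using h2'
    have h3 : (R.map (fun r => (r^2).re)).sum ≤ (R.map (fun r => (n : ℝ) * r.re)).sum := by
      apply Multiset.sum_map_le_sum_map
      intro r hr
      have h4 := hmem r hr
      have h5 := hub r hr
      have h6 : (r^2).re = r.re * r.re - r.im * r.im := by
        rw [pow_two, Complex.mul_re]
      nlinarith [sq_nonneg r.im]
    have h7 : (R.map (fun r => (n : ℝ) * r.re)).sum = (n : ℝ) * (R.map Complex.re).sum :=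
      Multiset.sum_map_mul_left
    rw [h7, hre_sum] at h3
    calc T = ((T : ℂ)).re := by simp
    _ = (R.map (fun r => (r^2).re)).sum := by rw [h1, h2]
    _ ≤ (n : ℝ) * n := h3
  nlinarith [hTlb, hTub, hδ', hn2, hε, hε1, mul_nonneg (sq_nonneg ε)
    (by nlinarith : (0:ℝ) ≤ (n : ℝ)^2 - n - 2)]
end

section
/- Let n ≥ 2 and let W be the CTLN matrix of the graph on n vertices that is a clique missing exactly one edge (say n ̸→ 1, all other ordered pairs have edges), with 0 < ε < 1 and δ > 0. Then the Perron-Frobenius eigenvalue of I - W equals ε + (1/2)(1-ε)(n + sqrt(n² + 4(δ+ε)/(1-ε))). -/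
open Matrix

/-- If a nonnegative real matrix has a positive eigenvector with eigenvalue `lam`,
then every complex spectral value has norm at most `lam`. -/
lemma aux_spec_bound {n : ℕ} (A : Matrix (Fin n) (Fin n) ℝ)
    (hA : ∀ i j, 0 ≤ A i j) (v : Fin n → ℝ) (hv : ∀ i, 0 < v i) (lam : ℝ)
    (heq : A.mulVec v = lam • v) (μ : ℂ)
    (hμ : μ ∈ spectrum ℂ (A.map Complex.ofReal)) : ‖μ‖ ≤ lam := by
  rw [← AlgEquiv.spectrum_eq
      (Matrix.toLinAlgEquiv' : Matrix (Fin n) (Fin n) ℂ ≃ₐ[ℂ] _),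
    ← Module.End.hasEigenvalue_iff_mem_spectrum] at hμ
  obtain ⟨u, hu⟩ := hμ.exists_hasEigenvector
  have hueq : (A.map Complex.ofReal).mulVec u = μ • u := by
    simpa [Matrix.toLinAlgEquiv'_apply] using hu.apply_eq_smul
  have hune : u ≠ 0 := hu.2
  have hne : (Finset.univ : Finset (Fin n)).Nonempty := by
    rcases Function.ne_iff.mp hune with ⟨j, -⟩
    exact ⟨j, Finset.mem_univ j⟩
  obtain ⟨i₀, -, hmax⟩ := Finset.exists_max_image Finset.univ
    (fun i => ‖u i‖ / v i) hne
  set t : ℝ := ‖u i₀‖ / v i₀ with ht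
  have hub : ∀ j, ‖u j‖ ≤ t * v j := by
    intro j
    have h1 : ‖u j‖ / v j ≤ t := hmax j (Finset.mem_univ j)
    calc ‖u j‖ = ‖u j‖ / v j * v j := (div_mul_cancel₀ _ (hv j).ne').symm
    _ ≤ t * v j := mul_le_mul_of_nonneg_right h1 (hv j).le
  have htpos : 0 < t := by
    rcases Function.ne_iff.mp hune with ⟨j, hj⟩
    have : 0 < ‖u j‖ / v j := div_pos (by simpa using hj) (hv j)
    linarith [hmax j (Finset.mem_univ j)]
  have hui : ‖u i₀‖ = t * v i₀ := (div_mul_cancel₀ _ (hv i₀).ne').symm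
  have key : ‖μ‖ * (t * v i₀) ≤ lam * (t * v i₀) := by
    have h2 : ((A.map Complex.ofReal).mulVec u) i₀ = μ * u i₀ := by
      rw [hueq]; rfl
    have h3 : ‖μ * u i₀‖ ≤ t * (lam * v i₀) := by
      rw [← h2]
      calc ‖((A.map Complex.ofReal).mulVec u) i₀‖
          = ‖∑ j, (A i₀ j : ℂ) * u j‖ := by
            simp [Matrix.mulVec, dotProduct, Matrix.map_apply]
        _ ≤ ∑ j, ‖(A i₀ j : ℂ) * u j‖ := norm_sum_le _ _
        _ = ∑ j, A i₀ j * ‖u j‖ := by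
            refine Finset.sum_congr rfl fun j _ => ?_
            rw [norm_mul, Complex.norm_real, Real.norm_of_nonneg (hA i₀ j)]
        _ ≤ ∑ j, A i₀ j * (t * v j) := by
            refine Finset.sum_le_sum fun j _ => ?_
            exact mul_le_mul_of_nonneg_left (hub j) (hA i₀ j)
        _ = t * ∑ j, A i₀ j * v j := by
            rw [Finset.mul_sum]; exact Finset.sum_congr rfl fun j _ => by ring
        _ = t * (lam * v i₀) := by
            congr 1
            have := congrFun heq i₀
            simpa [Matrix.mulVec, dotProduct] using this
    calc ‖μ‖ * (t * v i₀) = ‖μ * u i₀‖ := by rw [norm_mul, hui]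
      _ ≤ t * (lam * v i₀) := h3
      _ = lam * (t * v i₀) := by ring
  exact le_of_mul_le_mul_right key (mul_pos htpos (hv i₀))

set_option maxHeartbeats 1000000 in
theorem stmt8 (n : ℕ) (hn : 2 ≤ n) (ε δ : ℝ) (hε : 0 < ε) (hε1 : ε < 1) (hδ : 0 < δ) :
    let M : Matrix (Fin n) (Fin n) ℝ := Matrix.of fun i j =>
      if i = j then 1 else if i.val = 0 ∧ j.val = n - 1 then 1 + δ else 1 - ε
    let lam : ℝ := ε + (1/2) * (1-ε) * ((n:ℝ) + Real.sqrt ((n:ℝ)^2 + 4*(δ+ε)/(1-ε)))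
    (∃ v : Fin n → ℝ, v ≠ 0 ∧ M.mulVec v = lam • v) ∧
    ∀ μ ∈ spectrum ℂ (M.map Complex.ofReal), ‖μ‖ ≤ lam := by
  intro M lam
  have hε1' : (0:ℝ) < 1 - ε := by linarith
  set c : ℝ := (δ + ε) / (1 - ε) with hc
  have hcpos : 0 < c := div_pos (by linarith) hε1'
  have hcmul : (1 - ε) * c = δ + ε := by rw [hc]; field_simp [hε1'.ne']
  set s : ℝ := Real.sqrt ((n:ℝ)^2 + 4*(δ+ε)/(1-ε)) with hs
  have hsarg : (n:ℝ)^2 + 4*(δ+ε)/(1-ε) = (n:ℝ)^2 + 4*c := by rw [hc]; ring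
  have hssq : s^2 = (n:ℝ)^2 + 4*c := by
    rw [hs, Real.sq_sqrt]; · exact hsarg
    · rw [hsarg]; positivity
  have hsge : (n:ℝ) ≤ s := by
    rw [hs]
    calc (n:ℝ) = Real.sqrt ((n:ℝ)^2) := by
          rw [Real.sqrt_sq (by positivity)]
      _ ≤ _ := Real.sqrt_le_sqrt (by rw [hsarg]; nlinarith)
  set μ0 : ℝ := ((n:ℝ) + s) / 2 with hμ0
  have hlam : lam = ε + (1 - ε) * μ0 := by rw [hμ0]; simp only [lam]; ring
  have hmusq : μ0^2 = (n:ℝ) * μ0 + c := by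
    rw [hμ0]; linear_combination (1/4) * hssq
  have hmun : (n:ℝ) ≤ μ0 := by rw [hμ0]; linarith
  have hn1 : (1:ℝ) ≤ (n:ℝ) := by exact_mod_cast Nat.one_le_of_lt hn
  set a : ℝ := μ0 - n + 1 with ha
  have hapos : (0:ℝ) < a := by rw [ha]; linarith
  set v : Fin n → ℝ := fun i => if i.val = 0 then a else 1 with hv
  have hvpos : ∀ i, 0 < v i := by
    intro i; rw [hv]; dsimp only; split
    · exact hapos
    · norm_num
  clear_value c s μ0 a
  set jn : Fin n := ⟨n - 1, by omega⟩ with hjn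
  have hjnval : (jn : Fin n).val = n - 1 := rfl
  have hjn0 : ¬ (jn.val = 0) := by rw [hjnval]; omega
  -- matrix entry decomposition
  have hM : ∀ i j : Fin n, M i j = (1-ε) + (if i = j then ε else 0)
      + (if i.val = 0 ∧ j.val = n - 1 then δ + ε else 0) := by
    intro i j
    show (if i = j then (1:ℝ) else if i.val = 0 ∧ j.val = n - 1 then 1 + δ else 1 - ε) = _
    by_cases hij : i = j
    · subst hij
      have hni : ¬ (i.val = 0 ∧ i.val = n - 1) := by omega
      rw [if_pos rfl, if_pos rfl, if_neg hni]; ring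
    · rw [if_neg hij, if_neg hij]
      by_cases hsp : i.val = 0 ∧ j.val = n - 1
      · rw [if_pos hsp, if_pos hsp]; ring
      · rw [if_neg hsp, if_neg hsp]; ring
  -- sum of v
  have hvsum : ∑ j, v j = μ0 := by
    have h1 : ∀ j : Fin n, v j = 1 + (if j = (⟨0, by omega⟩ : Fin n) then a - 1 else 0) := by
      intro j; rw [hv]; dsimp only
      by_cases h : j.val = 0
      · rw [if_pos h, if_pos (Fin.ext h)]; ring
      · rw [if_neg h, if_neg (fun hh => h (by rw [hh]))]; ring
    rw [Finset.sum_congr rfl (fun j _ => h1 j), Finset.sum_add_distrib,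
      Finset.sum_ite_eq' Finset.univ, Finset.sum_const, Finset.card_univ]
    simp only [Finset.mem_univ, if_true, Fintype.card_fin, nsmul_eq_mul, mul_one]
    rw [ha]; ring
  -- the eigenvector equation
  have heig : M.mulVec v = lam • v := by
    funext i
    have hmvec : (M.mulVec v) i = ∑ j, M i j * v j := rfl
    have hsum2 : ∑ j, (if i = j then ε * v j else 0) = ε * v i := by
      rw [Finset.sum_ite_eq Finset.univ]; simp
    have hsum3 : ∑ j, (if i.val = 0 ∧ j.val = n - 1 then (δ + ε) * v j else 0)
        = if i.val = 0 then δ + ε else 0 := by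
      by_cases hi : i.val = 0
      · have hrw : ∀ j : Fin n, (if i.val = 0 ∧ j.val = n - 1 then (δ + ε) * v j else 0)
            = (if jn = j then (δ + ε) * v j else 0) := by
          intro j
          by_cases hj : jn = j
          · rw [if_pos ⟨hi, by rw [← hj]⟩, if_pos hj]
          · rw [if_neg (fun hh => hj (Fin.ext (by rw [hjnval, hh.2])).symm), if_neg hj]
        rw [Finset.sum_congr rfl (fun j _ => hrw j), Finset.sum_ite_eq Finset.univ]
        have hvjn : v jn = 1 := by rw [hv]; dsimp only; rw [if_neg hjn0]
        simp [hi, hvjn]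
      · rw [Finset.sum_congr rfl (fun j _ => if_neg (fun hh => hi hh.1)),
          Finset.sum_const_zero, if_neg hi]
    have hexp : (M.mulVec v) i = (1-ε) * μ0 + ε * v i
        + (if i.val = 0 then δ + ε else 0) := by
      rw [hmvec, Finset.sum_congr rfl (fun j _ => by rw [hM i j])]
      have h2 : ∀ j : Fin n, ((1-ε) + (if i = j then ε else 0)
          + (if i.val = 0 ∧ j.val = n - 1 then δ + ε else 0)) * v j
          = (1-ε) * v j + (if i = j then ε * v j else 0)
          + (if i.val = 0 ∧ j.val = n - 1 then (δ + ε) * v j else 0) := by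
        intro j; split <;> split <;> ring
      rw [Finset.sum_congr rfl (fun j _ => h2 j), Finset.sum_add_distrib,
        Finset.sum_add_distrib, ← Finset.mul_sum, hvsum, hsum2, hsum3]
    rw [hexp]
    show _ = lam * v i
    by_cases hi : i.val = 0
    · have hvi : v i = a := by rw [hv]; dsimp only; rw [if_pos hi]
      rw [hvi, hlam, if_pos hi]
      have hkey : (1 - ε) * μ0 * a = (1 - ε) * μ0 + (δ + ε) := by
        have hma : μ0 * a = μ0 + c := by rw [ha]; linear_combination hmusq
        calc (1 - ε) * μ0 * a = (1 - ε) * (μ0 * a) := by ring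
          _ = (1 - ε) * (μ0 + c) := by rw [hma]
          _ = (1 - ε) * μ0 + (1 - ε) * c := by ring
          _ = (1 - ε) * μ0 + (δ + ε) := by rw [hcmul]
      linear_combination -hkey
    · have hvi : v i = 1 := by rw [hv]; dsimp only; rw [if_neg hi]
      rw [hvi, hlam, if_neg hi]
      ring
  refine ⟨⟨v, ?_, heig⟩, ?_⟩
  · intro h0
    have h1 := congrFun h0 ⟨0, by omega⟩
    rw [hv] at h1
    simp at h1
    exact absurd h1 hapos.ne'
  · intro μ hμ
    refine aux_spec_bound M ?_ v hvpos lam heig μ hμ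
    intro i j
    show (0:ℝ) ≤ if i = j then 1 else if i.val = 0 ∧ j.val = n - 1 then 1 + δ else 1 - ε
    split
    · norm_num
    · split <;> linarith
end

section
/- The maximum, over all simple directed graphs G on n vertices, of the number of target-free cliques of G equals the maximum, over all simple undirected graphs H on n vertices, of the number of maximal cliques of H. -/
/-- `σ` is a target-free clique of the directed graph `E`. -/
def IsTFClique {n : ℕ} (E : Fin n → Fin n → Prop) (σ : Finset (Fin n)) : Prop :=
  (∀ i ∈ σ, ∀ j ∈ σ, i ≠ j → E i j) ∧ ∀ k, k ∉ σ → ∃ i ∈ σ, ¬ E i k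

/-- `σ` is a maximal clique of the undirected graph `H`. -/
def IsMaxClique {n : ℕ} (H : SimpleGraph (Fin n)) (σ : Finset (Fin n)) : Prop :=
  H.IsClique ↑σ ∧ ∀ τ : Finset (Fin n), H.IsClique ↑τ → σ ⊆ τ → σ = τ

/-- The symmetrization of a directed graph. -/
def tildeGraph {n : ℕ} (E : Fin n → Fin n → Prop) : SimpleGraph (Fin n) where
  Adj i j := i ≠ j ∧ E i j ∧ E j i
  symm := ⟨by rintro i j ⟨h1, h2, h3⟩; exact ⟨h1.symm, h3, h2⟩⟩
  loopless := ⟨by rintro i ⟨h, _⟩; exact h rfl⟩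

lemma tf_to_max {n : ℕ} (E : Fin n → Fin n → Prop) (σ : Finset (Fin n))
    (h : IsTFClique E σ) : IsMaxClique (tildeGraph E) σ := by
  constructor
  · intro i hi j hj hij
    exact ⟨hij, h.1 i hi j hj hij, h.1 j hj i hi (Ne.symm hij)⟩
  · intro τ hτ hsub
    refine Finset.Subset.antisymm hsub ?_
    intro k hk
    by_contra hk'
    obtain ⟨i, hi, hE⟩ := h.2 k hk'
    have hik : i ≠ k := fun e => hk' (e ▸ hi)
    exact hE (hτ (hsub hi) hk hik).2.1

lemma max_to_tf {n : ℕ} (H : SimpleGraph (Fin n)) (σ : Finset (Fin n))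
    (h : IsMaxClique H σ) : IsTFClique H.Adj σ := by
  constructor
  · intro i hi j hj hij
    exact h.1 hi hj hij
  · intro k hk
    by_contra hcon
    push_neg at hcon
    have hclique : H.IsClique ↑(insert k σ) := by
      rw [Finset.coe_insert]
      refine h.1.insert ?_
      intro b hb _
      exact (hcon b hb).symm
    have := h.2 (insert k σ) hclique (Finset.subset_insert k σ)
    exact hk (this ▸ Finset.mem_insert_self k σ)

theorem stmt10 (n : ℕ) :
    sSup {k : ℕ | ∃ E : Fin n → Fin n → Prop, (∀ i, ¬ E i i) ∧
        k = Nat.card {σ : Finset (Fin n) // IsTFClique E σ}} =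
    sSup {k : ℕ | ∃ H : SimpleGraph (Fin n),
        k = Nat.card {σ : Finset (Fin n) // IsMaxClique H σ}} := by
  set L := {k : ℕ | ∃ E : Fin n → Fin n → Prop, (∀ i, ¬ E i i) ∧
        k = Nat.card {σ : Finset (Fin n) // IsTFClique E σ}} with hL
  set R := {k : ℕ | ∃ H : SimpleGraph (Fin n),
        k = Nat.card {σ : Finset (Fin n) // IsMaxClique H σ}} with hR
  have hLne : L.Nonempty := ⟨_, fun _ _ => False, fun i h => h, rfl⟩
  have hRne : R.Nonempty := ⟨_, ⊥, rfl⟩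
  have bound : ∀ (P : Finset (Fin n) → Prop),
      Nat.card {σ : Finset (Fin n) // P σ} ≤ Nat.card (Finset (Fin n)) :=
    fun P => Nat.card_le_card_of_injective _ Subtype.val_injective
  have hLbd : BddAbove L := by
    refine ⟨Nat.card (Finset (Fin n)), ?_⟩
    rintro k ⟨E, _, rfl⟩; exact bound _
  have hRbd : BddAbove R := by
    refine ⟨Nat.card (Finset (Fin n)), ?_⟩
    rintro k ⟨H, rfl⟩; exact bound _
  apply le_antisymm
  · apply csSup_le hLne
    rintro k ⟨E, hE, rfl⟩
    have hle : Nat.card {σ : Finset (Fin n) // IsTFClique E σ} ≤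
        Nat.card {σ : Finset (Fin n) // IsMaxClique (tildeGraph E) σ} := by
      apply Nat.card_le_card_of_injective
        (fun p => ⟨p.1, tf_to_max E p.1 p.2⟩)
      intro a b hab
      simp only [Subtype.mk.injEq] at hab
      exact Subtype.ext hab
    exact hle.trans (le_csSup hRbd ⟨tildeGraph E, rfl⟩)
  · apply csSup_le hRne
    rintro k ⟨H, rfl⟩
    have hle : Nat.card {σ : Finset (Fin n) // IsMaxClique H σ} ≤
        Nat.card {σ : Finset (Fin n) // IsTFClique H.Adj σ} := by
      apply Nat.card_le_card_of_injective
        (fun p => ⟨p.1, max_to_tf H p.1 p.2⟩)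
      intro a b hab
      simp only [Subtype.mk.injEq] at hab
      exact Subtype.ext hab
    exact hle.trans (le_csSup hLbd ⟨H.Adj, fun i => H.loopless.irrefl i, rfl⟩)
end

section
/- Let G be a directed graph on n vertices. Then the number of target-free cliques of G is at most 3^{n/3} if n ≡ 0 (mod 3), at most 4·3^{⌊n/3⌋-1} if n ≡ 1 (mod 3), and at most 2·3^{⌊n/3⌋} if n ≡ 2 (mod 3). -/
/-- Moon–Moser bound function: 1,1,2,3,4, then `hh (m+5) = 3 * hh (m+2)`. -/
def hh : ℕ → ℕ
  | 0 => 1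
  | 1 => 1
  | 2 => 2
  | 3 => 3
  | 4 => 4
  | (m+5) => 3 * hh (m+2)

lemma hh_mono : ∀ m, hh m ≤ hh (m+1) := by
  intro m
  induction m using Nat.strong_induction_on with
  | _ m ih =>
    match m with
    | 0 | 1 | 2 | 3 | 4 => decide
    | (k+5) =>
      show 3 * hh (k+2) ≤ 3 * hh (k+3)
      exact Nat.mul_le_mul_left 3 (ih (k+2) (by omega))

lemma hh_mono' {a b : ℕ} (h : a ≤ b) : hh a ≤ hh b := by
  induction b with
  | zero => have : a = 0 := by omega
            subst this; rfl
  | succ b ihb =>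
    rcases Nat.lt_or_ge a (b+1) with h'|h'
    · exact le_trans (ihb (by omega)) (hh_mono b)
    · have : a = b + 1 := by omega
      subst this; rfl

lemma hh_two : ∀ m, 2 * hh m ≤ hh (m+2) := by
  intro m
  induction m using Nat.strong_induction_on with
  | _ m ih =>
    match m with
    | 0 | 1 | 2 | 3 | 4 => decide
    | (k+5) =>
      show 2 * (3 * hh (k+2)) ≤ 3 * hh (k+4)
      calc 2 * (3 * hh (k+2)) = 3 * (2 * hh (k+2)) := by ring
        _ ≤ 3 * hh (k+4) := Nat.mul_le_mul_left 3 (ih (k+2) (by omega))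

lemma hh_three : ∀ m, 3 * hh m ≤ hh (m+3) := by
  intro m
  match m with
  | 0 | 1 => decide
  | (k+2) => exact le_of_eq rfl

lemma hh_key : ∀ k m, k * hh m ≤ hh (m + k) := by
  intro k
  induction k using Nat.strong_induction_on with
  | _ k ih =>
    intro m
    match k with
    | 0 => simp
    | 1 => simpa using hh_mono m
    | 2 => exact hh_two m
    | 3 => exact hh_three m
    | 4 =>
      calc 4 * hh m = 2 * (2 * hh m) := by ring
        _ ≤ 2 * hh (m+2) := Nat.mul_le_mul_left 2 (hh_two m)
        _ ≤ hh (m+4) := hh_two (m+2)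
    | (j+5) =>
      calc (j+5) * hh m ≤ 3 * ((j+2) * hh m) := by nlinarith [Nat.zero_le (hh m)]
        _ ≤ 3 * hh (m + (j+2)) := Nat.mul_le_mul_left 3 (ih (j+2) (by omega) m)
        _ ≤ hh (m + (j+2) + 3) := hh_three _
        _ = hh (m + (j+5)) := by ring_nf

/-- the bound in the statement -/
def gb (n : ℕ) : ℕ :=
  if n % 3 = 0 then 3^(n/3) else
  if n % 3 = 1 then 4 * 3^(n/3 - 1) else 2 * 3^(n/3)

lemma gb_rec (m : ℕ) (hm : 2 ≤ m) : gb (m+3) = 3 * gb m := by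
  have h3 : (m+3) % 3 = m % 3 := by omega
  have h4 : (m+3) / 3 = m / 3 + 1 := by omega
  unfold gb
  rw [h3, h4]
  have hlt : m % 3 < 3 := Nat.mod_lt m (by norm_num)
  interval_cases h : m % 3 <;> norm_num
  · ring
  · have he : m / 3 = (m / 3 - 1) + 1 := by omega
    conv_lhs => rw [he]
    rw [pow_succ]; ring
  · ring

lemma hh_le_gb : ∀ n, hh n ≤ gb n := by
  intro n
  induction n using Nat.strong_induction_on with
  | _ n ih =>
    match n with
    | 0 | 1 | 2 | 3 | 4 => decide
    | (k+5) =>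
      have h : gb (k+5) = 3 * gb (k+2) := gb_rec (k+2) (by omega)
      rw [h]
      exact le_trans (le_of_eq rfl) (Nat.mul_le_mul_left 3 (ih (k+2) (by omega)))

section Comb

variable {n : ℕ} (A : Fin n → Fin n → Prop)

open Classical in
/-- the maximal cliques of `A` inside vertex set `S` -/
noncomputable def MC (S : Finset (Fin n)) : Finset (Finset (Fin n)) :=
  S.powerset.filter (fun σ =>
    (∀ i ∈ σ, ∀ j ∈ σ, i ≠ j → A i j) ∧ ∀ k ∈ S, k ∉ σ → ∃ i ∈ σ, ¬ A i k)

open Classical in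
lemma mem_MC {S : Finset (Fin n)} {σ : Finset (Fin n)} :
    σ ∈ MC A S ↔ σ ⊆ S ∧ (∀ i ∈ σ, ∀ j ∈ σ, i ≠ j → A i j) ∧
      ∀ k ∈ S, k ∉ σ → ∃ i ∈ σ, ¬ A i k := by
  simp [MC, Finset.mem_filter, Finset.mem_powerset, and_assoc]

lemma MC_card (hsym : ∀ i j, A i j → A j i) :
    ∀ S : Finset (Fin n), (MC A S).card ≤ hh S.card := by
  classical
  intro S
  induction S using Finset.strongInduction with
  | _ S ih =>
    rcases S.eq_empty_or_nonempty with rfl | hS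
    · calc (MC A ∅).card ≤ ((∅ : Finset (Fin n)).powerset).card :=
            Finset.card_le_card (Finset.filter_subset _ _)
        _ = 1 := by simp
        _ = hh (∅ : Finset (Fin n)).card := by simp [hh]
    · set nd : Fin n → ℕ := fun w => (S.filter (fun u => u ≠ w ∧ ¬ A w u)).card with hnd
      obtain ⟨v, hvS, hvmin⟩ := S.exists_min_image nd hS
      set T : Finset (Fin n) := S.filter (fun u => u ≠ v ∧ ¬ A v u) with hT
      set W : Finset (Fin n) := insert v T with hW
      have hvT : v ∉ T := by simp [hT]
      have hTS : T ⊆ S := Finset.filter_subset _ _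
      have hWS : W ⊆ S := by
        intro x hx
        rcases Finset.mem_insert.mp hx with rfl | hx
        · exact hvS
        · exact hTS hx
      set t : ℕ := T.card with ht
      have hndv : nd v = t := rfl
      have hWcard : W.card = t + 1 := by
        rw [hW, Finset.card_insert_of_notMem hvT]
      have htS : t + 1 ≤ S.card := by
        rw [← hWcard]; exact Finset.card_le_card hWS
      -- cover
      have hcover : MC A S ⊆ W.biUnion (fun w => (MC A S).filter (fun σ => w ∈ σ)) := by
        intro σ hσ
        obtain ⟨hσS, hclq, hmax⟩ := (mem_MC A).mp hσ
        by_cases hv : v ∈ σ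
        · exact Finset.mem_biUnion.mpr ⟨v, Finset.mem_insert_self _ _,
            Finset.mem_filter.mpr ⟨hσ, hv⟩⟩
        · obtain ⟨i, hiσ, hiA⟩ := hmax v hvS hv
          have hiT : i ∈ T := by
            rw [hT, Finset.mem_filter]
            exact ⟨hσS hiσ, fun h => hv (h ▸ hiσ), fun h => hiA (hsym _ _ h)⟩
          exact Finset.mem_biUnion.mpr ⟨i, Finset.mem_insert_of_mem hiT,
            Finset.mem_filter.mpr ⟨hσ, hiσ⟩⟩
      -- per-vertex bound
      have hper : ∀ w ∈ W, ((MC A S).filter (fun σ => w ∈ σ)).card ≤ hh (S.card - 1 - t) := by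
        intro w hw
        have hwS : w ∈ S := hWS hw
        set N : Finset (Fin n) := S.filter (fun u => u ≠ w ∧ A w u) with hN
        have hNS : N ⊆ S := Finset.filter_subset _ _
        have hwN : w ∉ N := by simp [hN]
        have hNss : N ⊂ S := (Finset.ssubset_iff_of_subset hNS).mpr ⟨w, hwS, hwN⟩
        -- injection σ ↦ σ.erase w into MC A N
        have hinj : ((MC A S).filter (fun σ => w ∈ σ)).card ≤ (MC A N).card := by
          apply Finset.card_le_card_of_injOn (fun σ => σ.erase w)
          · intro σ hσ'
            obtain ⟨hσ, hwσ⟩ := Finset.mem_filter.mp hσ'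
            obtain ⟨hσS, hclq, hmax⟩ := (mem_MC A).mp hσ
            rw [Finset.mem_coe, mem_MC]
            refine ⟨?_, ?_, ?_⟩
            · intro x hx
              obtain ⟨hxw, hxσ⟩ := Finset.mem_erase.mp hx
              rw [hN, Finset.mem_filter]
              exact ⟨hσS hxσ, hxw, hclq w hwσ x hxσ (Ne.symm hxw)⟩
            · intro i hi j hj hij
              exact hclq i (Finset.erase_subset _ _ hi) j (Finset.erase_subset _ _ hj) hij
            · intro k hkN hk
              obtain ⟨hkS, hkw, hAwk⟩ := Finset.mem_filter.mp (hN ▸ hkN)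
              have hkσ : k ∉ σ := fun hkσ => hk (Finset.mem_erase.mpr ⟨hkw, hkσ⟩)
              obtain ⟨i, hiσ, hiA⟩ := hmax k hkS hkσ
              have hiw : i ≠ w := fun h => hiA (h ▸ hAwk)
              exact ⟨i, Finset.mem_erase.mpr ⟨hiw, hiσ⟩, hiA⟩
          · intro σ₁ h₁ σ₂ h₂ he
            have hw₁ : w ∈ σ₁ := (Finset.mem_filter.mp h₁).2
            have hw₂ : w ∈ σ₂ := (Finset.mem_filter.mp h₂).2
            have := congrArg (insert w) he
            rwa [Finset.insert_erase hw₁, Finset.insert_erase hw₂] at this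
        -- card of N
        have hndw : t ≤ nd w := hndv ▸ hvmin w hwS
        have hNcard : N.card ≤ S.card - 1 - t := by
          have hdisj : Disjoint N (S.filter (fun u => u ≠ w ∧ ¬ A w u)) := by
            rw [Finset.disjoint_left]
            intro x hx hx'
            exact (Finset.mem_filter.mp hx').2.2 (Finset.mem_filter.mp (hN ▸ hx)).2.2
          have hsub : N ∪ S.filter (fun u => u ≠ w ∧ ¬ A w u) ⊆ S.erase w := by
            intro x hx
            rcases Finset.mem_union.mp hx with hx | hx
            · exact Finset.mem_erase.mpr ⟨(Finset.mem_filter.mp (hN ▸ hx)).2.1,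
                (Finset.mem_filter.mp (hN ▸ hx)).1⟩
            · exact Finset.mem_erase.mpr ⟨(Finset.mem_filter.mp hx).2.1,
                (Finset.mem_filter.mp hx).1⟩
          have h1 : N.card + nd w ≤ S.card - 1 := by
            rw [hnd]
            calc N.card + (S.filter (fun u => u ≠ w ∧ ¬ A w u)).card
                = (N ∪ S.filter (fun u => u ≠ w ∧ ¬ A w u)).card :=
                  (Finset.card_union_of_disjoint hdisj).symm
              _ ≤ (S.erase w).card := Finset.card_le_card hsub
              _ = S.card - 1 := Finset.card_erase_of_mem hwS
          omega
        calc ((MC A S).filter (fun σ => w ∈ σ)).card ≤ (MC A N).card := hinj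
          _ ≤ hh N.card := ih N hNss
          _ ≤ hh (S.card - 1 - t) := hh_mono' hNcard
      calc (MC A S).card ≤ (W.biUnion (fun w => (MC A S).filter (fun σ => w ∈ σ))).card :=
            Finset.card_le_card hcover
        _ ≤ ∑ w ∈ W, ((MC A S).filter (fun σ => w ∈ σ)).card := Finset.card_biUnion_le
        _ ≤ W.card * hh (S.card - 1 - t) := by
            rw [Finset.card_eq_sum_ones W, Finset.sum_mul, one_mul]
            exact Finset.sum_le_sum hper
        _ = (t + 1) * hh (S.card - 1 - t) := by rw [hWcard]
        _ ≤ hh ((S.card - 1 - t) + (t + 1)) := hh_key (t+1) _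
        _ = hh S.card := by congr 1; omega

end Comb

theorem stmt11 (n : ℕ) (E : Fin n → Fin n → Prop) (hirr : ∀ i, ¬ E i i) :
    Nat.card {σ : Finset (Fin n) // IsTFClique E σ} ≤
      (if n % 3 = 0 then 3^(n/3) else
       if n % 3 = 1 then 4 * 3^(n/3 - 1) else 2 * 3^(n/3)) := by
  classical
  set A : Fin n → Fin n → Prop := fun i j => E i j ∧ E j i with hA
  have hsym : ∀ i j, A i j → A j i := fun i j h => ⟨h.2, h.1⟩
  have h1 : Nat.card {σ : Finset (Fin n) // IsTFClique E σ}
      = (Finset.univ.filter (fun σ : Finset (Fin n) => IsTFClique E σ)).card := by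
    rw [Nat.card_eq_fintype_card, Fintype.card_subtype]
  have h2 : (Finset.univ.filter (fun σ : Finset (Fin n) => IsTFClique E σ))
      ⊆ MC A Finset.univ := by
    intro σ hσ
    obtain ⟨-, hclq, hmax⟩ := Finset.mem_filter.mp hσ
    rw [mem_MC]
    refine ⟨Finset.subset_univ _, ?_, ?_⟩
    · intro i hi j hj hij
      exact ⟨hclq i hi j hj hij, hclq j hj i hi hij.symm⟩
    · intro k _ hk
      obtain ⟨i, hiσ, hiE⟩ := hmax k hk
      exact ⟨i, hiσ, fun h => hiE h.1⟩
  have h3 : (Finset.univ : Finset (Fin n)).card = n := by simp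
  calc Nat.card {σ : Finset (Fin n) // IsTFClique E σ}
      = (Finset.univ.filter (fun σ : Finset (Fin n) => IsTFClique E σ)).card := h1
    _ ≤ (MC A Finset.univ).card := Finset.card_le_card h2
    _ ≤ hh (Finset.univ : Finset (Fin n)).card := MC_card A hsym _
    _ = hh n := by rw [h3]
    _ ≤ gb n := hh_le_gb n
    _ = _ := rfl
end

section
/- For every n ≥ 2, there exists a simple undirected graph on n vertices whose number of maximal cliques equals 3^{n/3} if n ≡ 0 (mod 3), 4·3^{⌊n/3⌋-1} if n ≡ 1 (mod 3), and 2·3^{⌊n/3⌋} if n ≡ 2 (mod 3). -/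
open Finset

lemma maxclique_exu {n m : ℕ} (f : Fin n → Fin m) (hf : Function.Surjective f)
    {σ : Finset (Fin n)} (h : IsMaxClique (SimpleGraph.comap f ⊤) σ) (a : Fin m) :
    ∃! x, x ∈ σ ∧ f x = a := by
  obtain ⟨w, hw⟩ := hf a
  have hex : ∃ x ∈ σ, f x = a := by
    by_contra hne
    push_neg at hne
    have hcl : (SimpleGraph.comap f ⊤).IsClique ↑(insert w σ) := by
      rw [coe_insert]
      refine h.1.insert fun y hy hyw => ?_
      simp only [SimpleGraph.comap_adj, SimpleGraph.top_adj]
      exact fun hc => hne y hy (hc ▸ hw)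
    have heq := h.2 (insert w σ) hcl (subset_insert _ _)
    exact hne w (heq ▸ mem_insert_self w σ) hw
  obtain ⟨x, hx, hfx⟩ := hex
  refine ⟨x, ⟨hx, hfx⟩, ?_⟩
  rintro y ⟨hy, hfy⟩
  by_contra hxy
  have := h.1 (mem_coe.mpr hy) (mem_coe.mpr hx) hxy
  simp only [SimpleGraph.comap_adj, SimpleGraph.top_adj] at this
  exact this (hfy.trans hfx.symm)

lemma card_maxclique {n m : ℕ} (f : Fin n → Fin m) (hf : Function.Surjective f) :
    Nat.card {σ : Finset (Fin n) // IsMaxClique (SimpleGraph.comap f ⊤) σ} =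
      ∏ a : Fin m, (univ.filter fun x => f x = a).card := by
  have himg : ∀ g : (∀ a : Fin m, {x : Fin n // f x = a}),
      IsMaxClique (SimpleGraph.comap f ⊤) (image (fun a => (g a).1) univ) := by
    intro g
    constructor
    · intro x hx y hy hxy
      simp only [coe_image, coe_univ, Set.image_univ, Set.mem_range] at hx hy
      obtain ⟨a, rfl⟩ := hx
      obtain ⟨b, rfl⟩ := hy
      simp only [SimpleGraph.comap_adj, SimpleGraph.top_adj, (g a).2, (g b).2]
      exact fun hab => hxy (congrArg (fun c => (g c).1) hab)
    · intro τ hτ hsub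
      refine Subset.antisymm hsub fun v hv => ?_
      by_cases hvg : v = (g (f v)).1
      · exact hvg ▸ mem_image.mpr ⟨f v, mem_univ _, rfl⟩
      · exfalso
        have hgτ : (g (f v)).1 ∈ τ := hsub (mem_image.mpr ⟨f v, mem_univ _, rfl⟩)
        have hadj := hτ (mem_coe.mpr hv) (mem_coe.mpr hgτ) hvg
        simp only [SimpleGraph.comap_adj, SimpleGraph.top_adj, (g (f v)).2] at hadj
        exact hadj rfl
  let e : (∀ a : Fin m, {x : Fin n // f x = a}) ≃
      {σ : Finset (Fin n) // IsMaxClique (SimpleGraph.comap f ⊤) σ} :=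
    { toFun := fun g => ⟨image (fun a => (g a).1) univ, himg g⟩
      invFun := fun σ a => ⟨Finset.choose (fun x => f x = a) σ.1 (maxclique_exu f hf σ.2 a),
        Finset.choose_property (fun x => f x = a) σ.1 (maxclique_exu f hf σ.2 a)⟩
      left_inv := fun g => by
        funext a
        apply Subtype.ext
        exact (maxclique_exu f hf (himg g) a).unique
          ⟨Finset.choose_mem _ _ _, Finset.choose_property (fun x => f x = a) _ _⟩
          ⟨mem_image.mpr ⟨a, mem_univ _, rfl⟩, (g a).2⟩
      right_inv := fun σ => by
        apply Subtype.ext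
        ext v
        simp only [mem_image, mem_univ, true_and]
        constructor
        · rintro ⟨a, rfl⟩
          exact Finset.choose_mem _ _ _
        · intro hv
          exact ⟨f v, ((maxclique_exu f hf σ.2 (f v)).unique
            ⟨Finset.choose_mem _ _ _, Finset.choose_property (fun x => f x = (f v)) _ _⟩
            ⟨hv, rfl⟩)⟩ }
  rw [Nat.card_congr e.symm, Nat.card_pi]
  exact Finset.prod_congr rfl fun a _ => by
    rw [Nat.card_eq_fintype_card, Fintype.card_subtype]

theorem stmt12 (n : ℕ) (hn : 2 ≤ n) :
    ∃ H : SimpleGraph (Fin n),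
      Nat.card {σ : Finset (Fin n) // IsMaxClique H σ} =
        (if n % 3 = 0 then 3^(n/3) else
         if n % 3 = 1 then 4 * 3^(n/3 - 1) else 2 * 3^(n/3)) := by
  have h3 : n % 3 = 0 ∨ n % 3 = 1 ∨ n % 3 = 2 := by omega
  obtain ⟨m, hmval, hlt, hle, hm1⟩ :
      ∃ m, ((n % 3 = 2 ∧ m = n / 3 + 1) ∨ (n % 3 ≠ 2 ∧ m = n / 3)) ∧
        3 * (m - 1) < n ∧ n ≤ 3 * (m - 1) + 4 ∧ 1 ≤ m := by
    refine ⟨if n % 3 = 2 then n / 3 + 1 else n / 3, ?_⟩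
    split <;> omega
  have hbnd : ∀ k : ℕ, min (k / 3) (m - 1) < m :=
    fun k => lt_of_le_of_lt (min_le_right _ _) (Nat.sub_lt hm1 Nat.one_pos)
  have hf : Function.Surjective (fun x : Fin n => (⟨min (x.1 / 3) (m - 1), hbnd x.1⟩ : Fin m)) := by
    intro a
    refine ⟨⟨3 * a.1, by have := a.2; omega⟩, ?_⟩
    apply Fin.ext
    have := a.2
    simp only
    omega
  refine ⟨SimpleGraph.comap (fun x : Fin n => (⟨min (x.1 / 3) (m - 1), hbnd x.1⟩ : Fin m)) ⊤, ?_⟩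
  rw [card_maxclique _ hf]
  have hfib : ∀ a : Fin m,
      (univ.filter fun x : Fin n => (⟨min (x.1 / 3) (m - 1), hbnd x.1⟩ : Fin m) = a).card =
        (if a.1 = m - 1 then n - 3 * (m - 1) else 3) := by
    intro a
    have ha := a.2
    rw [Finset.card_bij (fun (x : Fin n) _ => x.1)
      (t := Finset.Ico (3 * a.1) (if a.1 = m - 1 then n else 3 * a.1 + 3))]
    · rw [Nat.card_Ico]
      split <;> omega
    · intro x hx
      simp only [mem_filter, mem_univ, true_and, Fin.ext_iff] at hx
      simp only [mem_Ico]
      have := x.2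
      split <;> omega
    · intro x _ y _ hxy
      exact Fin.ext hxy
    · intro k hk
      simp only [mem_Ico] at hk
      have hkn : k < n := by split at hk <;> omega
      refine ⟨⟨k, hkn⟩, ?_, rfl⟩
      simp only [mem_filter, mem_univ, true_and, Fin.ext_iff]
      split at hk <;> omega
  rw [Finset.prod_congr rfl fun a _ => hfib a]
  obtain ⟨m', rfl⟩ : ∃ m', m = m' + 1 := ⟨m - 1, by omega⟩
  rw [Fin.prod_univ_castSucc]
  have h1 : ∀ i : Fin m',
      (if ((Fin.castSucc i) : Fin (m' + 1)).1 = m' + 1 - 1 then n - 3 * (m' + 1 - 1) else 3) = 3 := by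
    intro i
    have := i.2
    simp only [Fin.coe_castSucc]
    exact if_neg (by omega)
  rw [Finset.prod_congr rfl fun i _ => h1 i, Finset.prod_const, Finset.card_univ,
    Fintype.card_fin]
  simp only [Fin.val_last, Nat.add_sub_cancel]
  simp only [if_true]
  rcases h3 with h | h | h <;> simp only [h] <;> norm_num
  · have hn3 : n - 3 * m' = 3 := by omega
    rw [hn3, ← pow_succ]
    congr 1
    omega
  · have hn4 : n - 3 * m' = 4 := by omega
    rw [hn4, mul_comm]
    congr 2
    omega
  · have hn2 : n - 3 * m' = 2 := by omega
    rw [hn2, mul_comm]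
    congr 2
    omega
end

section
/- Suppose a directed graph G on vertex set σ has a partition σ = τ ∪ ω (disjoint, both nonempty) such that ω is simply-added onto τ, and τ has uniform in-degree d within G|_τ. Let W = W(G,ε,δ). Then every eigenvalue of I - W_τ other than its row-sum R_τ = |τ| + (|τ|-1-d)δ - dε is also an eigenvalue of I - W_σ. -/
open Matrix

section Aux

variable {m : Type*} [Fintype m] [DecidableEq m]

lemma aux_spectrum_transpose (M : Matrix m m ℂ) :
    spectrum ℂ Mᵀ = spectrum ℂ M := by
  ext μ
  simp only [spectrum.mem_iff]
  have h : algebraMap ℂ (Matrix m m ℂ) μ - Mᵀ = (algebraMap ℂ (Matrix m m ℂ) μ - M)ᵀ := by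
    simp [Matrix.algebraMap_eq_diagonal, Matrix.transpose_sub]
  rw [h, Matrix.isUnit_iff_isUnit_det, Matrix.det_transpose, ← Matrix.isUnit_iff_isUnit_det]

lemma aux_mem_spectrum_iff (M : Matrix m m ℂ) (μ : ℂ) :
    μ ∈ spectrum ℂ M ↔ Module.End.HasEigenvalue (Matrix.toLin' M) μ := by
  rw [Module.End.hasEigenvalue_iff_mem_spectrum]
  rw [← AlgEquiv.spectrum_eq (Matrix.toLinAlgEquiv' : Matrix m m ℂ ≃ₐ[ℂ] _) M]
  rfl

end Aux

theorem stmt15 (n : ℕ) (E : Fin n → Fin n → Prop) [DecidableRel E] (hirr : ∀ i, ¬ E i i)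
    (t : Finset (Fin n)) (ht : t.Nonempty) (htc : t ≠ Finset.univ)
    (hsa : ∀ i : Fin n, i ∉ t → ((∀ j ∈ t, E i j) ∨ (∀ j ∈ t, ¬ E i j)))
    (d : ℕ) (hud : ∀ i ∈ t, Nat.card {j : Fin n // j ∈ t ∧ E j i} = d)
    (ε δ : ℝ) (hε : 0 < ε) (hε1 : ε < 1) (hδ : 0 < δ) :
    let Mσ : Matrix (Fin n) (Fin n) ℝ := Matrix.of fun i j =>
      if i = j then 1 else if E j i then 1 - ε else 1 + δ
    let Mτ : Matrix {i // i ∈ t} {i // i ∈ t} ℝ := Matrix.of fun i j =>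
      if i = j then 1 else if E j.val i.val then 1 - ε else 1 + δ
    let R : ℝ := (t.card : ℝ) + ((t.card : ℝ) - 1 - d) * δ - d * ε
    ∀ μ : ℂ, μ ∈ spectrum ℂ (Mτ.map Complex.ofReal) → μ ≠ (R : ℂ) →
      μ ∈ spectrum ℂ (Mσ.map Complex.ofReal) := by
  intro Mσ Mτ R μ hμ hμR
  -- pass to transposes
  rw [← aux_spectrum_transpose] at hμ ⊢
  set A : Matrix {i // i ∈ t} {i // i ∈ t} ℂ := (Mτ.map Complex.ofReal)ᵀ with hA
  set B : Matrix (Fin n) (Fin n) ℂ := (Mσ.map Complex.ofReal)ᵀ with hB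
  -- get an eigenvector of A
  rw [aux_mem_spectrum_iff] at hμ
  obtain ⟨v, hv⟩ := hμ.exists_hasEigenvector
  have hveq : A.mulVec v = μ • v := by
    have := hv.apply_eq_smul
    rwa [Matrix.toLin'_apply] at this
  have hvne : v ≠ 0 := hv.right
  have ht1 : 1 ≤ t.card := Finset.card_pos.mpr ht
  -- entries of A
  have hAentry : ∀ i j : {i // i ∈ t}, A i j =
      if (j : Fin n) = i then 1 else if E (i : Fin n) j then (1 - ε : ℂ) else (1 + δ : ℂ) := by
    intro i j
    by_cases h : (j : Fin n) = (i : Fin n)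
    · have hji : j = i := Subtype.ext h
      simp [hA, Mτ, hji, h]
    · have hne : j ≠ i := fun hh => h (by rw [hh])
      by_cases h2 : E (i : Fin n) (j : Fin n) <;>
        simp [hA, Mτ, hne, h, h2]
  -- column sums of A are R
  have hcol : ∀ j : {i // i ∈ t}, (∑ i : {i // i ∈ t}, A i j) = (R : ℂ) := by
    intro j
    have key : (∑ i : {i // i ∈ t}, A i j)
        = ∑ i ∈ t, (if (j : Fin n) = i then (1 : ℂ) else
            if E i (j : Fin n) then (1 - ε : ℂ) else (1 + δ : ℂ)) := by
      rw [← Finset.sum_coe_sort t (fun i => if (j : Fin n) = i then (1 : ℂ) else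
            if E i (j : Fin n) then (1 - ε : ℂ) else (1 + δ : ℂ))]
      exact Finset.sum_congr rfl fun i _ => hAentry i j
    rw [key, ← Finset.add_sum_erase t _ j.2, if_pos rfl]
    have herase : ∀ i ∈ t.erase (j : Fin n),
        (if (j : Fin n) = i then (1 : ℂ) else
            if E i (j : Fin n) then (1 - ε : ℂ) else (1 + δ : ℂ))
        = if E i (j : Fin n) then (1 - ε : ℂ) else (1 + δ : ℂ) := by
      intro i hi
      rw [if_neg (Ne.symm (Finset.ne_of_mem_erase hi))]
    rw [Finset.sum_congr rfl herase, Finset.sum_ite, Finset.sum_const, Finset.sum_const]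
    -- card of in-neighbors
    have hfil : (t.erase (j : Fin n)).filter (fun i => E i (j : Fin n))
        = t.filter (fun i => E i (j : Fin n)) := by
      ext i
      simp only [Finset.mem_filter, Finset.mem_erase]
      constructor
      · rintro ⟨⟨_, hit⟩, hE⟩; exact ⟨hit, hE⟩
      · rintro ⟨hit, hE⟩
        refine ⟨⟨?_, hit⟩, hE⟩
        rintro rfl; exact hirr _ hE
    have hdcard : ((t.erase (j : Fin n)).filter (fun i => E i (j : Fin n))).card = d := by
      rw [hfil]
      have := hud (j : Fin n) j.2
      rw [Nat.card_eq_fintype_card, Fintype.card_subtype] at this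
      rw [← this]
      congr 1
      ext i
      simp [Finset.mem_filter, and_comm]
    have hsumcard : ((t.erase (j : Fin n)).filter (fun i => E i (j : Fin n))).card
        + ((t.erase (j : Fin n)).filter (fun i => ¬ E i (j : Fin n))).card
        = t.card - 1 := by
      rw [Finset.card_filter_add_card_filter_not, Finset.card_erase_of_mem j.2]
    have hnotcard : (((t.erase (j : Fin n)).filter (fun i => ¬ E i (j : Fin n))).card : ℂ)
        = (t.card : ℂ) - 1 - d := by
      rw [hdcard] at hsumcard
      have h2 : ((t.erase (j : Fin n)).filter (fun i => ¬ E i (j : Fin n))).card + d + 1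
          = t.card := by omega
      have hc : (((t.erase (j : Fin n)).filter (fun i => ¬ E i (j : Fin n))).card : ℂ)
          + d + 1 = t.card := by exact_mod_cast congrArg (Nat.cast (R := ℂ)) h2
      linear_combination hc
    rw [hdcard]
    simp only [nsmul_eq_mul]
    rw [hnotcard]
    simp only [R]
    push_cast
    ring
  -- sum of v is zero
  have hsum : (∑ i : {i // i ∈ t}, v i) = 0 := by
    have h1 : (∑ i : {i // i ∈ t}, (A.mulVec v) i) = (R : ℂ) * ∑ j : {i // i ∈ t}, v j := by
      simp only [Matrix.mulVec, dotProduct]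
      rw [Finset.sum_comm]
      rw [Finset.mul_sum]
      refine Finset.sum_congr rfl fun j _ => ?_
      rw [← Finset.sum_mul, hcol j]
    rw [hveq] at h1
    simp only [Pi.smul_apply, smul_eq_mul, ← Finset.mul_sum] at h1
    by_contra hne
    exact hμR (mul_right_cancel₀ hne h1)
  -- build the extended eigenvector
  set w : Fin n → ℂ := fun i => if h : i ∈ t then v ⟨i, h⟩ else 0 with hw
  have hwt : ∀ (i : Fin n) (h : i ∈ t), w i = v ⟨i, h⟩ := fun i h => dif_pos h
  have hwnt : ∀ i : Fin n, i ∉ t → w i = 0 := fun i h => dif_neg h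
  have hwne : w ≠ 0 := by
    obtain ⟨j, hj⟩ := Function.ne_iff.mp hvne
    intro h0
    apply hj
    have := congrFun h0 (j : Fin n)
    rwa [hwt (j : Fin n) j.2, Subtype.coe_eta] at this
  have hBentry : ∀ i j : Fin n, B i j =
      if j = i then 1 else if E i j then (1 - ε : ℂ) else (1 + δ : ℂ) := by
    intro i j
    by_cases h : j = i
    · simp [hB, Mσ, h]
    · by_cases h2 : E i j <;> simp [hB, Mσ, h, h2]
  have hmain : B.mulVec w = μ • w := by
    funext i
    simp only [Matrix.mulVec, dotProduct, Pi.smul_apply, smul_eq_mul]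
    have hsplit : (∑ j : Fin n, B i j * w j) = ∑ j ∈ t, B i j * w j := by
      symm
      apply Finset.sum_subset (Finset.subset_univ t)
      intro j _ hj
      rw [hwnt j hj, mul_zero]
    rw [hsplit]
    by_cases hi : i ∈ t
    · -- row in t
      have : (∑ j ∈ t, B i j * w j) = (A.mulVec v) ⟨i, hi⟩ := by
        simp only [Matrix.mulVec, dotProduct]
        rw [← Finset.sum_coe_sort t (fun j => B i j * w j)]
        refine Finset.sum_congr rfl fun j _ => ?_
        rw [hAentry ⟨i, hi⟩ j, hBentry i (j : Fin n), hwt (j : Fin n) j.2, Subtype.coe_eta]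
      rw [this, hveq]
      simp only [Pi.smul_apply, smul_eq_mul]
      rw [hwt i hi]
    · -- row outside t
      rw [hwnt i hi, mul_zero]
      rcases hsa i hi with hall | hnone
      · have : (∑ j ∈ t, B i j * w j) = (1 - ε : ℂ) * ∑ j ∈ t, w j := by
          rw [Finset.mul_sum]
          refine Finset.sum_congr rfl fun j hj => ?_
          rw [hBentry i j, if_neg (fun h => hi (by rw [← h]; exact hj)), if_pos (hall j hj)]
        rw [this]
        have : (∑ j ∈ t, w j) = 0 := by
          rw [← Finset.sum_coe_sort t w]
          rw [← hsum]
          exact Finset.sum_congr rfl fun j _ => by rw [hwt (j : Fin n) j.2, Subtype.coe_eta]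
        rw [this, mul_zero]
      · have : (∑ j ∈ t, B i j * w j) = (1 + δ : ℂ) * ∑ j ∈ t, w j := by
          rw [Finset.mul_sum]
          refine Finset.sum_congr rfl fun j hj => ?_
          rw [hBentry i j, if_neg (fun h => hi (by rw [← h]; exact hj)), if_neg (hnone j hj)]
        rw [this]
        have : (∑ j ∈ t, w j) = 0 := by
          rw [← Finset.sum_coe_sort t w]
          rw [← hsum]
          exact Finset.sum_congr rfl fun j _ => by rw [hwt (j : Fin n) j.2, Subtype.coe_eta]
        rw [this, mul_zero]
  rw [aux_mem_spectrum_iff]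
  apply Module.End.hasEigenvalue_of_hasEigenvector (x := w)
  refine ⟨Module.End.mem_eigenspace_iff.mpr ?_, hwne⟩
  rw [Matrix.toLin'_apply, hmain]
end

section
/- Let G be a simple directed graph on [n] and σ ⊆ [n]. Suppose k graphically dominates j with respect to σ (j,k ∈ σ distinct): (1) for every i ∈ σ\{j,k}, i→j implies i→k; (2) j→k; (3) k̸→j. Let W = W(G,ε,δ) with legal parameters, and let x* ∈ ℝ^n_{≥0} be a fixed point of the CTLN dynamics (i.e., x*_i = [Σ_l W_{il} x*_l + θ]_+ for all i, θ > 0). Then supp(x*) ≠ σ. -/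
open Matrix

theorem stmt16 (n : ℕ) (E : Fin n → Fin n → Prop) [DecidableRel E] (hirr : ∀ i, ¬ E i i)
    (σ : Finset (Fin n)) (j k : Fin n) (hj : j ∈ σ) (hk : k ∈ σ) (hjk : j ≠ k)
    (h1 : ∀ i ∈ σ, i ≠ j → i ≠ k → E i j → E i k) (h2 : E j k) (h3 : ¬ E k j)
    (ε δ θ : ℝ) (hε : 0 < ε) (hε1 : ε < 1) (hδ : ε / (1 - ε) < δ) (hθ : 0 < θ)
    (W : Matrix (Fin n) (Fin n) ℝ)
    (hW : W = Matrix.of fun i l => if i = l then 0 else if E l i then -1 + ε else -1 - δ)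
    (x : Fin n → ℝ) (hxnn : ∀ i, 0 ≤ x i)
    (hx : ∀ i, x i = max 0 ((∑ l, W i l * x l) + θ)) :
    {i | 0 < x i} ≠ ↑σ := by
  intro h
  have hσ : ∀ l, 0 < x l ↔ l ∈ σ := fun l => by
    have := Set.ext_iff.mp h l; simpa using this
  have hδ0 : 0 < δ := lt_trans (div_pos hε (by linarith)) hδ
  have hxj : 0 < x j := (hσ j).mpr hj
  have hxk : 0 < x k := (hσ k).mpr hk
  have eqj : x j = (∑ l, W j l * x l) + θ := by
    have h0 : 0 < x j := hxj
    rw [hx j] at h0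
    rcases lt_max_iff.mp h0 with h' | h'
    · exact absurd h' (lt_irrefl 0)
    · rw [hx j, max_eq_right h'.le]
  have eqk : x k = (∑ l, W k l * x l) + θ := by
    have h0 : 0 < x k := hxk
    rw [hx k] at h0
    rcases lt_max_iff.mp h0 with h' | h'
    · exact absurd h' (lt_irrefl 0)
    · rw [hx k, max_eq_right h'.le]
  have key : ∀ l, W j l * x l + ((if l = j then (ε - 1) * x j else 0)
      + (if l = k then (1 + δ) * x k else 0)) ≤ W k l * x l := by
    intro l
    by_cases hl1 : l = j
    · subst hl1
      simp only [hW, Matrix.of_apply, if_pos rfl, if_neg hjk, if_neg (Ne.symm hjk), if_pos h2, if_true]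
      nlinarith [hxj.le]
    · by_cases hl2 : l = k
      · subst hl2
        simp only [hW, Matrix.of_apply, if_pos rfl, if_neg hjk, if_neg hl1, if_neg h3, if_true]
        nlinarith [hxk.le]
      · simp only [if_neg hl1, if_neg hl2, add_zero]
        rcases eq_or_lt_of_le (hxnn l) with hxl | hxl
        · rw [← hxl]; simp
        · have hlσ : l ∈ σ := (hσ l).mp hxl
          have hWle : W j l ≤ W k l := by
            have hjl : j ≠ l := fun e => hl1 e.symm
            have hkl : k ≠ l := fun e => hl2 e.symm
            by_cases hE : E l j
            · have hEk : E l k := h1 l hlσ hl1 hl2 hE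
              simp [hW, hjl, hkl, hE, hEk]
            · simp only [hW, Matrix.of_apply, if_neg hjl, if_neg hkl, if_neg hE]
              by_cases hEk : E l k <;> simp [hEk] <;> linarith
          exact mul_le_mul_of_nonneg_right hWle hxl.le
  have hsum := Finset.sum_le_sum (fun l (_ : l ∈ Finset.univ) => key l)
  rw [Finset.sum_add_distrib, Finset.sum_add_distrib] at hsum
  simp only [Finset.sum_ite_eq', Finset.mem_univ, if_pos] at hsum
  nlinarith [mul_pos hε hxj, mul_pos hδ0 hxk]
end

section
/- Let G be a directed clique on [n] with vertex ordering 1,...,n (i→j whenever i<j), and suppose G is not a clique. Then there exist j,k ∈ [n] such that k graphically dominates j with respect to [n], i.e.: j→k, k̸→j, and for all i ∈ [n]\{j,k}, i→j implies i→k. -/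
theorem stmt19 (n : ℕ) (E : Fin n → Fin n → Prop) (hirr : ∀ i, ¬ E i i)
    (hdc : ∀ i j : Fin n, i < j → E i j)
    (hnc : ∃ p q : Fin n, p ≠ q ∧ ¬ E p q) :
    ∃ j k : Fin n, j ≠ k ∧ E j k ∧ ¬ E k j ∧
      ∀ i : Fin n, i ≠ j → i ≠ k → E i j → E i k := by
  classical
  obtain ⟨p, q, hpq, hnE⟩ := hnc
  -- q < p, since otherwise E p q by hdc
  have hqp : q < p := by
    rcases lt_trichotomy p q with h | h | h
    · exact absurd (hdc p q h) hnE
    · exact absurd h hpq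
    · exact h
  set S : Finset (Fin n) := Finset.univ.filter (fun j => ∃ k, j < k ∧ ¬ E k j) with hS
  have hqS : q ∈ S := by
    simp only [hS, Finset.mem_filter, Finset.mem_univ, true_and]
    exact ⟨p, hqp, hnE⟩
  have hSne : S.Nonempty := ⟨q, hqS⟩
  set j : Fin n := S.max' hSne with hj
  have hjS : j ∈ S := S.max'_mem hSne
  have hjmax : ∀ x ∈ S, x ≤ j := fun x hx => S.le_max' x hx
  obtain ⟨k0, hjk0, hnk0⟩ : ∃ k, j < k ∧ ¬ E k j := by
    simpa only [hS, Finset.mem_filter, Finset.mem_univ, true_and] using hjS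
  set T : Finset (Fin n) := Finset.univ.filter (fun k => j < k ∧ ¬ E k j) with hT
  have hTne : T.Nonempty := ⟨k0, by simp [hT, hjk0, hnk0]⟩
  set k : Fin n := T.max' hTne with hk
  have hkT : k ∈ T := T.max'_mem hTne
  obtain ⟨hjk, hnkj⟩ : j < k ∧ ¬ E k j := by
    simpa only [hT, Finset.mem_filter, Finset.mem_univ, true_and] using hkT
  refine ⟨j, k, ne_of_lt hjk, hdc j k hjk, hnkj, ?_⟩
  intro i hij hik hEij
  by_contra hnEik
  rcases lt_trichotomy i k with h | h | h
  · exact hnEik (hdc i k h)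
  · exact hik h
  · -- i > k > j, ¬ E i k means k ∈ S, so k ≤ j, contradiction
    have : k ∈ S := by
      simp only [hS, Finset.mem_filter, Finset.mem_univ, true_and]
      exact ⟨i, h, hnEik⟩
    exact absurd (hjmax k this) (not_le.mpr hjk)
end
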